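/- arXiv:1407.1822 — 5 statements merged into one kernel-verified Lean document; each statement's English description precedes it below -/
import Mathlib

section
/- Let c < 1 and let f : (c,1) → ℝ be differentiable with derivative bounded on every compact subinterval of (c,1). Then for every ε with 0 < ε < 1 − c and every x with c < x < 1 − ε one has ∫_x^{1−ε} f(t)/((t−c)·√(t−x)) dt = (1/√(x−c)) · ∫_x^{1−ε} (1/√(t−c)) · ( f(1−ε)/√(1−t−ε) − ∫_t^{1−ε} f′(u)/√(u−t) du ) dt. -/
open MeasureTheory Set intervalIntegral

lemma sqrt_inv_eq_rpow (v : ℝ) : (Real.sqrt v)⁻¹ = v ^ (-(1/2) : ℝ) := by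
  rcases lt_trichotomy v 0 with h | h | h
  · rw [Real.sqrt_eq_zero_of_nonpos h.le, Real.rpow_def_of_neg h,
      show (-(1/2) : ℝ) * Real.pi = -(Real.pi / 2) by ring, Real.cos_neg,
      Real.cos_pi_div_two]
    simp
  · simp [h]
  · rw [Real.rpow_neg h.le, ← Real.sqrt_eq_rpow]

lemma II_sing_left (a b : ℝ) :
    IntervalIntegrable (fun t => (Real.sqrt (t - a))⁻¹) volume a b := by
  have h : IntervalIntegrable (fun t : ℝ => t ^ (-(1/2) : ℝ)) volume (a - a) (b - a) :=
    intervalIntegral.intervalIntegrable_rpow' (by norm_num)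
  have h2 := h.comp_sub_right a
  simp only [sub_add_cancel] at h2
  simpa only [sqrt_inv_eq_rpow] using h2

lemma II_sing_right (a b : ℝ) :
    IntervalIntegrable (fun t => (Real.sqrt (b - t))⁻¹) volume a b := by
  have h : IntervalIntegrable (fun t : ℝ => (Real.sqrt (t - 0))⁻¹) volume (b - a) (b - b) := by
    rw [sub_self]
    exact (II_sing_left 0 (b - a)).symm
  have h2 := h.comp_sub_left b
  simp only [sub_sub_cancel] at h2
  simpa only [sub_zero] using h2

lemma sqrt_int {t b : ℝ} (h : t ≤ b) :
    ∫ u in t..b, (Real.sqrt (u - t))⁻¹ = 2 * Real.sqrt (b - t) := by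
  have := intervalIntegral.integral_eq_sub_of_hasDerivAt_of_le h
    (f := fun u => 2 * Real.sqrt (u - t)) (f' := fun u => (Real.sqrt (u - t))⁻¹)
    (by fun_prop) ?_ (II_sing_left t b)
  · simpa using this
  · intro u hu
    have h1 : (0:ℝ) < u - t := by simp at hu; linarith [hu.1]
    have h2 : HasDerivAt (fun u : ℝ => u - t) 1 u := by
      simpa using (hasDerivAt_id u).sub_const t
    have := (h2.sqrt h1.ne').const_mul 2
    refine this.congr_deriv ?_
    have hs : Real.sqrt (u - t) ≠ 0 := by positivity
    ring

lemma key_integral {c x u : ℝ} (hcx : c < x) (hxu : x < u) :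
    ∫ t in x..u, (Real.sqrt (t - c) * Real.sqrt (u - t))⁻¹
      = 2 * Real.arctan (Real.sqrt (u - x) / Real.sqrt (x - c)) := by
  have hint : IntervalIntegrable (fun t => (Real.sqrt (t - c) * Real.sqrt (u - t))⁻¹)
      volume x u := by
    have h1 : IntervalIntegrable (fun t => (Real.sqrt (u - t))⁻¹) volume x u :=
      II_sing_right x u
    have h2 : ContinuousOn (fun t => (Real.sqrt (t - c))⁻¹) (Set.uIcc x u) := by
      apply ContinuousOn.inv₀
      · fun_prop
      · intro t ht
        rw [Set.uIcc_of_le hxu.le] at ht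
        have : c < t := lt_of_lt_of_le hcx ht.1
        exact (Real.sqrt_pos.2 (by linarith)).ne'
    simpa only [mul_inv] using h1.continuousOn_mul h2
  have := intervalIntegral.integral_eq_sub_of_hasDerivAt_of_le hxu.le
    (f := fun t => -2 * Real.arctan (Real.sqrt (u - t) / Real.sqrt (t - c)))
    (f' := fun t => (Real.sqrt (t - c) * Real.sqrt (u - t))⁻¹) ?_ ?_ hint
  · rw [this]
    simp [sub_self]
  · -- continuity
    apply ContinuousOn.mul continuousOn_const
    apply Real.continuous_arctan.comp_continuousOn
    apply ContinuousOn.div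
    · fun_prop
    · fun_prop
    · intro t ht
      have : c < t := lt_of_lt_of_le hcx ht.1
      exact (Real.sqrt_pos.2 (by linarith)).ne'
  · intro t ht
    obtain ⟨htx, htu⟩ := ht
    have hc : (0:ℝ) < t - c := by linarith
    have hu' : (0:ℝ) < u - t := by linarith
    have sc := Real.sqrt_pos.2 hc
    have su := Real.sqrt_pos.2 hu'
    have hsc2 : Real.sqrt (t - c) * Real.sqrt (t - c) = t - c := Real.mul_self_sqrt hc.le
    have hsu2 : Real.sqrt (u - t) * Real.sqrt (u - t) = u - t := Real.mul_self_sqrt hu'.le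
    have d1 : HasDerivAt (fun t : ℝ => u - t) (-1) t := by
      simpa using (hasDerivAt_id t).const_sub u
    have d2 : HasDerivAt (fun t : ℝ => t - c) 1 t := by
      simpa using (hasDerivAt_id t).sub_const c
    have dN : HasDerivAt (fun t : ℝ => Real.sqrt (u - t)) (-1 / (2 * Real.sqrt (u - t))) t :=
      d1.sqrt hu'.ne'
    have dD : HasDerivAt (fun t : ℝ => Real.sqrt (t - c)) (1 / (2 * Real.sqrt (t - c))) t :=
      d2.sqrt hc.ne'
    have dq := dN.div dD sc.ne'
    have da := dq.arctan.const_mul (-2)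
    refine da.congr_deriv ?_
    have alg : ∀ a b : ℝ, 0 < a → 0 < b →
        -2 * (1 / (1 + (b/a)^2) * ((-1/(2*b)*a - b*(1/(2*a)))/a^2)) = (a*b)⁻¹ := by
      intro a b ha hb; field_simp; ring
    exact alg _ _ sc su

lemma arctan_abs_le (z : ℝ) : |2 * Real.arctan z| ≤ Real.pi := by
  have h1 := Real.arctan_lt_pi_div_two z
  have h2 := Real.neg_pi_div_two_lt_arctan z
  have h3 : |Real.arctan z| ≤ Real.pi / 2 := le_of_lt (abs_lt.2 ⟨h2, h1⟩)
  rw [abs_mul, abs_two]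
  linarith

lemma II_deriv_mul_cont {f : ℝ → ℝ} {a b M : ℝ} (hab : a ≤ b)
    (hM : ∀ t ∈ Set.Icc a b, |deriv f t| ≤ M) {g : ℝ → ℝ} {C : ℝ} (hC : 0 ≤ C)
    (hg : Measurable g) (hgb : ∀ t, |g t| ≤ C) :
    IntervalIntegrable (fun t => deriv f t * g t) volume a b := by
  have hM0 : 0 ≤ M := le_trans (abs_nonneg _) (hM a ⟨le_refl a, hab⟩)
  rw [intervalIntegrable_iff_integrableOn_Ioc_of_le hab]
  apply Integrable.mono' (integrable_const (M * C))
  · exact ((measurable_deriv f).mul hg).aestronglyMeasurable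
  · filter_upwards [ae_restrict_mem measurableSet_Ioc] with t ht
    have h1 : |deriv f t| ≤ M := hM t ⟨ht.1.le, ht.2⟩
    calc ‖deriv f t * g t‖ = |deriv f t| * |g t| := abs_mul _ _
      _ ≤ M * C := mul_le_mul h1 (hgb t) (abs_nonneg _) hM0

lemma ibp {c x b : ℝ} {f : ℝ → ℝ} (hcx : c < x) (hxb : x < b)
    (hd : ∀ t ∈ Set.Icc x b, DifferentiableAt ℝ f t)
    (hM : ∃ M, ∀ t ∈ Set.Icc x b, |deriv f t| ≤ M) :
    Real.sqrt (x - c) * ∫ t in x..b, f t / ((t - c) * Real.sqrt (t - x))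
      = f b * (2 * Real.arctan (Real.sqrt (b - x) / Real.sqrt (x - c)))
        - ∫ u in x..b, deriv f u * (2 * Real.arctan (Real.sqrt (u - x) / Real.sqrt (x - c))) := by
  obtain ⟨M, hM⟩ := hM
  set k := Real.sqrt (x - c) with hk
  have hk0 : 0 < k := Real.sqrt_pos.2 (by linarith)
  have hk2 : k ^ 2 = x - c := Real.sq_sqrt (by linarith)
  have hfc : ContinuousOn f (Set.Icc x b) := fun t ht => (hd t ht).continuousAt.continuousWithinAt
  -- define A
  set A : ℝ → ℝ := fun t => 2 * Real.arctan (Real.sqrt (t - x) / k) with hA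
  have hAcont : Continuous A := by
    apply Continuous.mul continuous_const
    exact Real.continuous_arctan.comp (by fun_prop)
  have hAbd : ∀ t, |A t| ≤ Real.pi := fun t => arctan_abs_le _
  -- integrability of the two pieces
  have int1 : IntervalIntegrable (fun t => deriv f t * A t) volume x b :=
    II_deriv_mul_cont hxb.le hM Real.pi_pos.le hAcont.measurable hAbd
  have int2 : IntervalIntegrable (fun t => k * (f t / ((t - c) * Real.sqrt (t - x)))) volume x b := by
    have h1 : ContinuousOn (fun t => k * f t / (t - c)) (Set.uIcc x b) := by
      rw [Set.uIcc_of_le hxb.le]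
      apply ContinuousOn.div (continuousOn_const.mul hfc) (by fun_prop)
      intro t ht
      have : c < t := lt_of_lt_of_le hcx ht.1
      exact ne_of_gt (by linarith)
    have := (II_sing_left x b).continuousOn_mul h1
    apply this.congr
    intro t _
    simp [div_eq_mul_inv, mul_inv]
    ring
  -- FTC for f * A
  have ftc := intervalIntegral.integral_eq_sub_of_hasDerivAt_of_le hxb.le
    (f := fun t => f t * A t)
    (f' := fun t => deriv f t * A t + k * (f t / ((t - c) * Real.sqrt (t - x))))
    (hfc.mul hAcont.continuousOn) ?_ (int1.add int2)
  · rw [intervalIntegral.integral_add int1 int2, intervalIntegral.integral_const_mul] at ftc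
    beta_reduce at ftc
    have hAx : A x = 0 := by simp [hA]
    rw [hAx, mul_zero, sub_zero] at ftc
    show k * (∫ t in x..b, f t / ((t - c) * Real.sqrt (t - x))) = f b * A b - ∫ u in x..b, deriv f u * A u
    linarith
  · intro t ht
    obtain ⟨htx, htb⟩ := ht
    have ha : (0:ℝ) < t - x := by linarith
    have sa := Real.sqrt_pos.2 ha
    have ha2 : Real.sqrt (t - x) ^ 2 = t - x := Real.sq_sqrt ha.le
    have dfa : HasDerivAt f (deriv f t) t := (hd t ⟨htx.le, htb.le⟩).hasDerivAt
    have d2 : HasDerivAt (fun t : ℝ => t - x) 1 t := by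
      simpa using (hasDerivAt_id t).sub_const x
    have dsq : HasDerivAt (fun t : ℝ => Real.sqrt (t - x)) (1 / (2 * Real.sqrt (t - x))) t :=
      d2.sqrt ha.ne'
    have dA : HasDerivAt A (2 * (1 / (1 + (Real.sqrt (t - x) / k) ^ 2)
        * (1 / (2 * Real.sqrt (t - x)) / k))) t := ((dsq.div_const k).arctan).const_mul 2
    have hval : 2 * (1 / (1 + (Real.sqrt (t - x) / k) ^ 2)
        * (1 / (2 * Real.sqrt (t - x)) / k)) = k * ((t - c) * Real.sqrt (t - x))⁻¹ := by
      have htc : t - c = k ^ 2 + Real.sqrt (t - x) ^ 2 := by rw [hk2, ha2]; ring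
      rw [htc]
      field_simp
    rw [hval] at dA
    have := dfa.mul dA
    refine this.congr_deriv ?_
    have hsc : Real.sqrt (t - x) ≠ 0 := sa.ne'
    have htc0 : t - c ≠ 0 := ne_of_gt (by linarith)
    ring

section Fubini

variable {c x b M : ℝ} {f : ℝ → ℝ}

lemma fubini_part (hcx : c < x) (hxb : x < b)
    (hM : ∀ t ∈ Set.Icc x b, |deriv f t| ≤ M) :
    (∫ t in x..b, (Real.sqrt (t - c))⁻¹ * (∫ u in t..b, deriv f u / Real.sqrt (u - t))
      = ∫ u in x..b, deriv f u * (2 * Real.arctan (Real.sqrt (u - x) / Real.sqrt (x - c))))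
    ∧ IntervalIntegrable
        (fun t => (Real.sqrt (t - c))⁻¹ * (∫ u in t..b, deriv f u / Real.sqrt (u - t)))
        volume x b := by
  have hM0 : 0 ≤ M := le_trans (abs_nonneg _) (hM x ⟨le_refl x, hxb.le⟩)
  set S : Set ℝ := Set.Ioc x b with hS
  set μ : Measure ℝ := volume.restrict S with hμ
  set H : ℝ → ℝ → ℝ := fun t u =>
    if t < u then deriv f u * (Real.sqrt (t - c) * Real.sqrt (u - t))⁻¹ else 0 with hH
  have measK : Measurable fun p : ℝ × ℝ =>
      (Real.sqrt (p.1 - c) * Real.sqrt (p.2 - p.1))⁻¹ := by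
    apply Measurable.inv
    exact ((Real.continuous_sqrt.comp (by fun_prop)).mul
      (Real.continuous_sqrt.comp (by fun_prop))).measurable
  have measH : Measurable (Function.uncurry H) := by
    have : Function.uncurry H = fun p : ℝ × ℝ => if p.1 < p.2 then
        deriv f p.2 * (Real.sqrt (p.1 - c) * Real.sqrt (p.2 - p.1))⁻¹ else 0 := rfl
    rw [this]
    exact Measurable.ite (measurableSet_lt measurable_fst measurable_snd)
      (((measurable_deriv f).comp measurable_snd).mul measK) measurable_const
  have hIS : ∀ t ∈ S, Set.Ioi t ∩ S = Set.Ioc t b := by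
    intro t ht
    ext u
    simp only [Set.mem_inter_iff, Set.mem_Ioi, hS, Set.mem_Ioc]
    exact ⟨fun ⟨h1, _, h3⟩ => ⟨h1, h3⟩, fun ⟨h1, h2⟩ => ⟨h1, ht.1.trans h1, h2⟩⟩
  have heqH : ∀ t : ℝ, (fun u => H t u) = Set.indicator (Set.Ioi t)
      (fun u => deriv f u * (Real.sqrt (t - c) * Real.sqrt (u - t))⁻¹) := by
    intro t
    ext u
    simp [hH, Set.indicator_apply]
  -- per-t integrability over Ioc t b
  have keyIntOn : ∀ t, x < t → IntegrableOn
      (fun u => deriv f u * (Real.sqrt (t - c) * Real.sqrt (u - t))⁻¹)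
      (Set.Ioc t b) volume := by
    intro t hxt
    rcases le_or_gt t b with htb | htb
    swap
    · rw [Set.Ioc_eq_empty (by linarith)]
      exact integrableOn_empty
    have hsc : (0:ℝ) < Real.sqrt (t - c) := Real.sqrt_pos.2 (by linarith)
    have maj : IntegrableOn
        (fun u => M * (Real.sqrt (t - c))⁻¹ * (Real.sqrt (u - t))⁻¹) (Set.Ioc t b) volume := by
      have := (II_sing_left t b).const_mul (M * (Real.sqrt (t - c))⁻¹)
      rwa [intervalIntegrable_iff_integrableOn_Ioc_of_le htb] at this
    apply Integrable.mono' maj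
    · exact ((measurable_deriv f).mul (by fun_prop :
        Measurable fun u => (Real.sqrt (t - c) * Real.sqrt (u - t))⁻¹)).aestronglyMeasurable
    · filter_upwards [ae_restrict_mem measurableSet_Ioc] with u hu
      have h1 : |deriv f u| ≤ M := hM u ⟨(hxt.trans hu.1).le, hu.2⟩
      have h2 : (0:ℝ) ≤ (Real.sqrt (t - c) * Real.sqrt (u - t))⁻¹ := by positivity
      calc ‖deriv f u * (Real.sqrt (t - c) * Real.sqrt (u - t))⁻¹‖
          = |deriv f u| * (Real.sqrt (t - c) * Real.sqrt (u - t))⁻¹ := by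
            rw [norm_mul, Real.norm_eq_abs, Real.norm_eq_abs, abs_of_nonneg h2]
        _ ≤ M * (Real.sqrt (t - c) * Real.sqrt (u - t))⁻¹ := by
            apply mul_le_mul_of_nonneg_right h1 h2
        _ = M * (Real.sqrt (t - c))⁻¹ * (Real.sqrt (u - t))⁻¹ := by
            rw [mul_inv]; ring
  -- integrability on the product
  have hInt : Integrable (Function.uncurry H) (μ.prod μ) := by
    rw [MeasureTheory.integrable_prod_iff measH.aestronglyMeasurable]
    constructor
    · filter_upwards [ae_restrict_mem measurableSet_Ioc] with t ht
      show Integrable (fun u => H t u) μ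
      rw [heqH t, MeasureTheory.integrable_indicator_iff measurableSet_Ioi]
      rw [IntegrableOn, hμ, Measure.restrict_restrict measurableSet_Ioi, hIS t ht]
      exact keyIntOn t ht.1
    · apply Integrable.mono'
        (integrable_const (M * (Real.sqrt (x - c))⁻¹ * (2 * Real.sqrt (b - x))))
      · exact (measH.norm.stronglyMeasurable.integral_prod_right').aestronglyMeasurable
      · filter_upwards [ae_restrict_mem measurableSet_Ioc] with t ht
        have hnn : (0:ℝ) ≤ ∫ u, ‖H t u‖ ∂μ := integral_nonneg fun u => norm_nonneg _
        show ‖∫ u, ‖H t u‖ ∂μ‖ ≤ _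
        rw [Real.norm_eq_abs, abs_of_nonneg hnn]
        have hsc : (0:ℝ) < Real.sqrt (t - c) := Real.sqrt_pos.2 (by linarith [ht.1])
        set Φ : ℝ → ℝ := Set.indicator (Set.Ioi t)
          (fun u => M * (Real.sqrt (t - c))⁻¹ * (Real.sqrt (u - t))⁻¹) with hΦ
        have hΦint : Integrable Φ μ := by
          rw [hΦ, MeasureTheory.integrable_indicator_iff measurableSet_Ioi]
          rw [IntegrableOn, hμ, Measure.restrict_restrict measurableSet_Ioi, hIS t ht]
          have := (II_sing_left t b).const_mul (M * (Real.sqrt (t - c))⁻¹)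
          rwa [intervalIntegrable_iff_integrableOn_Ioc_of_le ht.2] at this
        have step1 : ∫ u, ‖H t u‖ ∂μ ≤ ∫ u, Φ u ∂μ := by
          apply integral_mono_of_nonneg (Filter.Eventually.of_forall fun u => norm_nonneg _) hΦint
          filter_upwards [ae_restrict_mem measurableSet_Ioc] with u hu
          show ‖H t u‖ ≤ Φ u
          rw [hH, hΦ]
          by_cases h : t < u
          · simp only [if_pos h, Set.indicator_of_mem (Set.mem_Ioi.2 h)]
            have h1 : |deriv f u| ≤ M := hM u ⟨(ht.1.trans h).le, hu.2⟩
            have h2 : (0:ℝ) ≤ (Real.sqrt (t - c) * Real.sqrt (u - t))⁻¹ := by positivity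
            calc ‖deriv f u * (Real.sqrt (t - c) * Real.sqrt (u - t))⁻¹‖
                = |deriv f u| * (Real.sqrt (t - c) * Real.sqrt (u - t))⁻¹ := by
                  rw [norm_mul, Real.norm_eq_abs, Real.norm_eq_abs, abs_of_nonneg h2]
              _ ≤ M * (Real.sqrt (t - c) * Real.sqrt (u - t))⁻¹ :=
                  mul_le_mul_of_nonneg_right h1 h2
              _ = M * (Real.sqrt (t - c))⁻¹ * (Real.sqrt (u - t))⁻¹ := by
                  rw [mul_inv]; ring
          · simp only [if_neg h, Set.indicator_of_notMem (fun hc => h (Set.mem_Ioi.1 hc))]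
            simp
        have step2 : ∫ u, Φ u ∂μ
            = M * (Real.sqrt (t - c))⁻¹ * (2 * Real.sqrt (b - t)) := by
          rw [hΦ, MeasureTheory.integral_indicator measurableSet_Ioi, hμ,
            Measure.restrict_restrict measurableSet_Ioi, hIS t ht,
            ← intervalIntegral.integral_of_le ht.2,
            intervalIntegral.integral_const_mul, sqrt_int ht.2]
        have step3 : M * (Real.sqrt (t - c))⁻¹ * (2 * Real.sqrt (b - t))
            ≤ M * (Real.sqrt (x - c))⁻¹ * (2 * Real.sqrt (b - x)) := by
          have i1 : (Real.sqrt (t - c))⁻¹ ≤ (Real.sqrt (x - c))⁻¹ := by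
            apply inv_anti₀ (Real.sqrt_pos.2 (by linarith))
            exact Real.sqrt_le_sqrt (by linarith [ht.1])
          have i2 : Real.sqrt (b - t) ≤ Real.sqrt (b - x) :=
            Real.sqrt_le_sqrt (by linarith [ht.1])
          have j1 : (0:ℝ) ≤ (Real.sqrt (t - c))⁻¹ := by positivity
          have j2 : (0:ℝ) ≤ Real.sqrt (b - t) := Real.sqrt_nonneg _
          have j3 : (0:ℝ) ≤ (Real.sqrt (x - c))⁻¹ := by positivity
          have k1 : (Real.sqrt (t - c))⁻¹ * Real.sqrt (b - t)
              ≤ (Real.sqrt (x - c))⁻¹ * Real.sqrt (b - x) := mul_le_mul i1 i2 j2 j3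
          have k2 := mul_le_mul_of_nonneg_left k1 hM0
          calc M * (Real.sqrt (t - c))⁻¹ * (2 * Real.sqrt (b - t))
              = 2 * (M * ((Real.sqrt (t - c))⁻¹ * Real.sqrt (b - t))) := by ring
            _ ≤ 2 * (M * ((Real.sqrt (x - c))⁻¹ * Real.sqrt (b - x))) := by linarith
            _ = M * (Real.sqrt (x - c))⁻¹ * (2 * Real.sqrt (b - x)) := by ring
        linarith [step1, step2.le, step3]
  -- the swap
  have swap := MeasureTheory.integral_integral_swap hInt
  -- left side evaluation (pointwise)
  have hLpt : ∀ t ∈ S, (∫ u, H t u ∂μ)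
      = (Real.sqrt (t - c))⁻¹ * (∫ u in t..b, deriv f u / Real.sqrt (u - t)) := by
    intro t ht
    calc ∫ u, H t u ∂μ
        = ∫ u in Set.Ioc t b, deriv f u * (Real.sqrt (t - c) * Real.sqrt (u - t))⁻¹ := by
          rw [heqH t, MeasureTheory.integral_indicator measurableSet_Ioi, hμ,
            Measure.restrict_restrict measurableSet_Ioi, hIS t ht]
      _ = ∫ u in t..b, deriv f u * (Real.sqrt (t - c) * Real.sqrt (u - t))⁻¹ :=
          (intervalIntegral.integral_of_le ht.2).symm
      _ = (Real.sqrt (t - c))⁻¹ * ∫ u in t..b, deriv f u / Real.sqrt (u - t) := by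
          rw [← intervalIntegral.integral_const_mul]
          apply intervalIntegral.integral_congr
          intro u _
          show deriv f u * (Real.sqrt (t - c) * Real.sqrt (u - t))⁻¹
            = (Real.sqrt (t - c))⁻¹ * (deriv f u / Real.sqrt (u - t))
          rw [mul_inv, div_eq_mul_inv]
          ring
  have hL : ∫ t, (∫ u, H t u ∂μ) ∂μ
      = ∫ t in x..b, (Real.sqrt (t - c))⁻¹ * (∫ u in t..b, deriv f u / Real.sqrt (u - t)) := by
    rw [intervalIntegral.integral_of_le hxb.le]
    exact setIntegral_congr_fun measurableSet_Ioc hLpt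
  -- integrability of the left marginal
  have hTI2 : IntervalIntegrable
      (fun t => (Real.sqrt (t - c))⁻¹ * (∫ u in t..b, deriv f u / Real.sqrt (u - t)))
      volume x b := by
    rw [intervalIntegrable_iff_integrableOn_Ioc_of_le hxb.le]
    have h1 : Integrable (fun t => ∫ u, H t u ∂μ) μ := hInt.integral_prod_left
    apply h1.congr
    filter_upwards [ae_restrict_mem measurableSet_Ioc] with t ht
    exact hLpt t ht
  -- right side evaluation
  have hR : ∫ u, (∫ t, H t u ∂μ) ∂μ
      = ∫ u in x..b, deriv f u
          * (2 * Real.arctan (Real.sqrt (u - x) / Real.sqrt (x - c))) := by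
    rw [intervalIntegral.integral_of_le hxb.le]
    apply setIntegral_congr_fun measurableSet_Ioc
    intro u hu
    have heqH' : (fun t => H t u) = Set.indicator (Set.Iio u)
        (fun t => deriv f u * (Real.sqrt (t - c) * Real.sqrt (u - t))⁻¹) := by
      ext t
      simp [hH, Set.indicator_apply]
    have hIS' : Set.Iio u ∩ S = Set.Ioo x u := by
      ext t
      simp only [Set.mem_inter_iff, Set.mem_Iio, hS, Set.mem_Ioc, Set.mem_Ioo]
      exact ⟨fun ⟨h1, h2, _⟩ => ⟨h2, h1⟩, fun ⟨h1, h2⟩ => ⟨h2, h1, (h2.trans_le hu.2).le⟩⟩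
    calc ∫ t, H t u ∂μ
        = ∫ t in Set.Ioo x u, deriv f u * (Real.sqrt (t - c) * Real.sqrt (u - t))⁻¹ := by
          rw [heqH', MeasureTheory.integral_indicator measurableSet_Iio, hμ,
            Measure.restrict_restrict measurableSet_Iio, hIS']
      _ = ∫ t in Set.Ioc x u, deriv f u * (Real.sqrt (t - c) * Real.sqrt (u - t))⁻¹ :=
          (MeasureTheory.integral_Ioc_eq_integral_Ioo).symm
      _ = ∫ t in x..u, deriv f u * (Real.sqrt (t - c) * Real.sqrt (u - t))⁻¹ :=
          (intervalIntegral.integral_of_le hu.1.le).symm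
      _ = deriv f u * ∫ t in x..u, (Real.sqrt (t - c) * Real.sqrt (u - t))⁻¹ :=
          intervalIntegral.integral_const_mul _ _
      _ = deriv f u * (2 * Real.arctan (Real.sqrt (u - x) / Real.sqrt (x - c))) := by
          rw [key_integral hcx hu.1]
  exact ⟨by rw [← hL, swap, hR], hTI2⟩

end Fubini

/-- Lemma 4.1 (Convolution1a) of Ablinger–Blümlein–Raab–Schneider:
for `c < 1`, `f` differentiable on `(c,1)` with derivative bounded on every
compact subinterval, `0 < ε < 1 - c` and `c < x < 1 - ε`,
`∫_x^{1-ε} f(t)/((t-c)·√(t-x)) dt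
  = (1/√(x-c)) ∫_x^{1-ε} (1/√(t-c)) (f(1-ε)/√(1-t-ε) - ∫_t^{1-ε} f'(u)/√(u-t) du) dt`. -/
theorem stmt_0 (c : ℝ) (hc : c < 1) (f : ℝ → ℝ)
    (hdiff : ∀ t ∈ Set.Ioo c 1, DifferentiableAt ℝ f t)
    (hbdd : ∀ p q : ℝ, c < p → q < 1 →
      ∃ M : ℝ, ∀ t ∈ Set.Icc p q, |deriv f t| ≤ M)
    (ε : ℝ) (hε0 : 0 < ε) (hε1 : ε < 1 - c)
    (x : ℝ) (hxc : c < x) (hx1 : x < 1 - ε) :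
    (∫ t in x..(1 - ε), f t / ((t - c) * Real.sqrt (t - x))) =
      (Real.sqrt (x - c))⁻¹ *
        ∫ t in x..(1 - ε), (Real.sqrt (t - c))⁻¹ *
          (f (1 - ε) / Real.sqrt (1 - t - ε)
            - ∫ u in t..(1 - ε), deriv f u / Real.sqrt (u - t)) := by
  set b : ℝ := 1 - ε with hb
  have hxb : x < b := hx1
  have hb1 : b < 1 := by rw [hb]; linarith
  have hd : ∀ t ∈ Set.Icc x b, DifferentiableAt ℝ f t := fun t ht =>
    hdiff t ⟨hxc.trans_le ht.1, lt_of_le_of_lt ht.2 hb1⟩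
  obtain ⟨M, hM⟩ := hbdd x b hxc hb1
  have hk0 : (0:ℝ) < Real.sqrt (x - c) := Real.sqrt_pos.2 (by linarith)
  have hibp := ibp hxc hxb hd ⟨M, hM⟩
  obtain ⟨hfub, hTI2⟩ := fubini_part hxc hxb hM
  -- rewrite 1 - t - ε into b - t
  have hrw : (∫ t in x..b, (Real.sqrt (t - c))⁻¹ *
        (f b / Real.sqrt (1 - t - ε) - ∫ u in t..b, deriv f u / Real.sqrt (u - t)))
      = ∫ t in x..b, (Real.sqrt (t - c))⁻¹ *
        (f b / Real.sqrt (b - t) - ∫ u in t..b, deriv f u / Real.sqrt (u - t)) := by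
    apply intervalIntegral.integral_congr
    intro t _
    have h : 1 - t - ε = b - t := by rw [hb]; ring
    beta_reduce
    rw [h]
  -- integrability of the first RHS piece
  have TI1 : IntervalIntegrable
      (fun t => (Real.sqrt (t - c))⁻¹ * (f b / Real.sqrt (b - t))) volume x b := by
    have h2 : ContinuousOn (fun t => (Real.sqrt (t - c))⁻¹ * f b) (Set.uIcc x b) := by
      apply ContinuousOn.mul _ continuousOn_const
      apply ContinuousOn.inv₀ (by fun_prop)
      intro t ht
      rw [Set.uIcc_of_le hxb.le] at ht
      exact (Real.sqrt_pos.2 (by linarith [ht.1])).ne'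
    have := (II_sing_right x b).continuousOn_mul h2
    apply this.congr
    intro t _
    simp only [div_eq_mul_inv]
    ring
  -- split the RHS integral
  have hsplit : (∫ t in x..b, (Real.sqrt (t - c))⁻¹ *
        (f b / Real.sqrt (b - t) - ∫ u in t..b, deriv f u / Real.sqrt (u - t)))
      = (∫ t in x..b, (Real.sqrt (t - c))⁻¹ * (f b / Real.sqrt (b - t)))
        - ∫ t in x..b, (Real.sqrt (t - c))⁻¹
            * (∫ u in t..b, deriv f u / Real.sqrt (u - t)) := by
    rw [← intervalIntegral.integral_sub TI1 hTI2]
    apply intervalIntegral.integral_congr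
    intro t _
    beta_reduce
    ring
  -- first piece value
  have hfirst : (∫ t in x..b, (Real.sqrt (t - c))⁻¹ * (f b / Real.sqrt (b - t)))
      = f b * (2 * Real.arctan (Real.sqrt (b - x) / Real.sqrt (x - c))) := by
    rw [← key_integral hxc hxb, ← intervalIntegral.integral_const_mul]
    apply intervalIntegral.integral_congr
    intro t _
    show (Real.sqrt (t - c))⁻¹ * (f b / Real.sqrt (b - t))
      = f b * (Real.sqrt (t - c) * Real.sqrt (b - t))⁻¹
    rw [mul_inv, div_eq_mul_inv]
    ring
  rw [hrw, hsplit, hfirst, hfub, ← hibp]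
  rw [inv_mul_cancel_left₀ hk0.ne']
end

section
/- Let a < 0 and let f : (a,1) → ℝ be differentiable with derivative bounded on every compact subinterval of (a,1). Then for every ε > 0 and every x with a < x < 1 − ε one has ∫_x^{1−ε} f(t)/√((t−a)(t−x)) dt = ∫_x^{1−ε} (1/(t−a)) · ( √(1−a−ε)·f(1−ε)/√(1−t−ε) − ∫_t^{1−ε} √(u−a)·f′(u)/√(u−t) du ) dt. -/
open MeasureTheory Set Real

/-- Integrability of `1/√(u-c)` on `[c,d]`. -/
lemma sqrtInv_intInt (c d : ℝ) (h : c ≤ d) :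
    IntervalIntegrable (fun u => (Real.sqrt (u - c))⁻¹) volume c d := by
  have h1 : IntervalIntegrable (fun s : ℝ => s ^ (-(1/2) : ℝ)) volume 0 (d - c) :=
    intervalIntegral.intervalIntegrable_rpow' (by norm_num)
  have h2 := (h1.comp_sub_right c)
  simp only [zero_add] at h2
  have h2' : IntervalIntegrable (fun u : ℝ => (u - c) ^ (-(1/2) : ℝ)) volume c d := by
    have : d - c + c = d := by ring
    rwa [this] at h2
  refine h2'.mono_fun ?_ ?_
  · exact ((Real.continuous_sqrt.comp (continuous_id.sub continuous_const)).measurable.inv).aestronglyMeasurable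
  · filter_upwards [MeasureTheory.ae_restrict_mem measurableSet_uIoc] with u hu
    rw [Set.uIoc_of_le h] at hu
    have h0 : (0:ℝ) ≤ u - c := by linarith [hu.1]
    rw [Real.rpow_neg h0, Real.sqrt_eq_rpow]

/-- reflected version -/
lemma sqrtInvRev_intInt (c d : ℝ) (h : c ≤ d) :
    IntervalIntegrable (fun t => (Real.sqrt (d - t))⁻¹) volume c d := by
  have h1 := (sqrtInv_intInt 0 (d - c) (by linarith)).comp_sub_left d
  simp only [sub_zero] at h1
  have : d - (d - c) = c := by ring
  rw [this] at h1
  exact h1.symm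

/-- Value of `∫_c^d 1/√(u-c) = 2√(d-c)`. -/
lemma sqrtInv_integral (c d : ℝ) (h : c ≤ d) :
    ∫ u in c..d, (Real.sqrt (u - c))⁻¹ = 2 * Real.sqrt (d - c) := by
  have := intervalIntegral.integral_eq_sub_of_hasDeriv_right_of_le h
    (f := fun u => 2 * Real.sqrt (u - c)) (f' := fun u => (Real.sqrt (u - c))⁻¹)
    (by fun_prop) ?_ (sqrtInv_intInt c d h)
  · rw [this]; simp
  · intro u hu
    have hu0 : u - c ≠ 0 := sub_ne_zero.mpr (ne_of_gt hu.1)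
    have : HasDerivAt (fun u => 2 * Real.sqrt (u - c)) ((Real.sqrt (u - c))⁻¹) u := by
      have h1 : HasDerivAt (fun u : ℝ => u - c) 1 u := (hasDerivAt_id u).sub_const c
      have h2 := (Real.hasDerivAt_sqrt hu0).comp u h1
      have h3 := h2.const_mul 2
      refine h3.congr_deriv ?_
      have hs : Real.sqrt (u - c) ≠ 0 := Real.sqrt_ne_zero'.mpr (by linarith [hu.1])
      field_simp
    exact this.hasDerivWithinAt

/-- Integrability of the kernel `1/√((t-a)(t-x))` on `[x,d]`, `a<x≤d`. -/
lemma K1_intInt {a x d : ℝ} (hax : a < x) (hxd : x ≤ d) :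
    IntervalIntegrable (fun t => (Real.sqrt ((t - a) * (t - x)))⁻¹) volume x d := by
  have hbig : IntervalIntegrable (fun t => (Real.sqrt (x - a))⁻¹ * (Real.sqrt (t - x))⁻¹) volume x d :=
    (sqrtInv_intInt x d hxd).const_mul _
  refine hbig.mono_fun ?_ ?_
  · exact ((Real.continuous_sqrt.comp (by continuity)).measurable.inv).aestronglyMeasurable
  · filter_upwards [MeasureTheory.ae_restrict_mem measurableSet_uIoc] with t ht
    rw [Set.uIoc_of_le hxd] at ht
    have h1 : (0:ℝ) < x - a := by linarith
    have h2 : (0:ℝ) < t - x := by linarith [ht.1]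
    have h3 : (0:ℝ) < t - a := by linarith
    rw [Real.norm_eq_abs, Real.norm_eq_abs, abs_of_nonneg (by positivity), abs_of_nonneg (by positivity),
      Real.sqrt_mul (le_of_lt h3), mul_inv]
    have : (Real.sqrt (t - a))⁻¹ ≤ (Real.sqrt (x - a))⁻¹ := by
      apply inv_anti₀ (Real.sqrt_pos.mpr h1)
      exact Real.sqrt_le_sqrt (by linarith)
    exact mul_le_mul_of_nonneg_right this (by positivity)

/-- Value of the kernel-1 integral. -/
lemma K1_integral {a x u : ℝ} (hax : a < x) (hxu : x ≤ u) :
    ∫ t in x..u, (Real.sqrt ((t - a) * (t - x)))⁻¹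
      = 2 * Real.log (Real.sqrt (u - a) + Real.sqrt (u - x)) - Real.log (x - a) := by
  set F : ℝ → ℝ := fun t => 2 * Real.log (Real.sqrt (t - a) + Real.sqrt (t - x)) with hF
  have key : ∀ t ∈ Set.Ioo x u, HasDerivAt F ((Real.sqrt ((t - a) * (t - x)))⁻¹) t := by
    intro t ht
    have h3 : (0:ℝ) < t - a := by linarith [ht.1]
    have h2 : (0:ℝ) < t - x := by linarith [ht.1]
    have hp : (0:ℝ) < Real.sqrt (t - a) := Real.sqrt_pos.mpr h3
    have hq : (0:ℝ) < Real.sqrt (t - x) := Real.sqrt_pos.mpr h2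
    have d1 : HasDerivAt (fun t : ℝ => Real.sqrt (t - a)) (1 / (2 * Real.sqrt (t - a))) t := by
      have := (Real.hasDerivAt_sqrt (ne_of_gt h3)).comp t ((hasDerivAt_id t).sub_const a)
      exact this.congr_deriv (mul_one _)
    have d2 : HasDerivAt (fun t : ℝ => Real.sqrt (t - x)) (1 / (2 * Real.sqrt (t - x))) t := by
      have := (Real.hasDerivAt_sqrt (ne_of_gt h2)).comp t ((hasDerivAt_id t).sub_const x)
      exact this.congr_deriv (mul_one _)
    have dsum := d1.add d2
    have hspos : (0:ℝ) < Real.sqrt (t - a) + Real.sqrt (t - x) := by positivity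
    have dlog := (dsum.log (ne_of_gt hspos)).const_mul 2
    refine dlog.congr_deriv ?_
    simp only [Pi.add_apply]
    rw [Real.sqrt_mul (le_of_lt h3)]
    field_simp
    ring
  have cont : ContinuousOn F (Set.Icc x u) := by
    apply ContinuousOn.mul continuousOn_const
    apply ContinuousOn.log
    · fun_prop
    · intro t ht
      have : (0:ℝ) < Real.sqrt (t - a) := Real.sqrt_pos.mpr (by linarith [ht.1])
      positivity
  have := intervalIntegral.integral_eq_sub_of_hasDeriv_right_of_le hxu cont
    (fun t ht => (key t ht).hasDerivWithinAt) (K1_intInt hax hxu)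
  rw [this, hF]
  simp only
  rw [show x - x = 0 by ring, Real.sqrt_zero, add_zero,
    show (2:ℝ) * Real.log (Real.sqrt (x - a)) = Real.log (x - a) by
      rw [Real.log_sqrt (by linarith)]; ring]

/-- Integrability of the kernel `1/((t-a)√(u-t))` on `[x,u]`. -/
lemma K2_intInt {a x u : ℝ} (hax : a < x) (hxu : x ≤ u) :
    IntervalIntegrable (fun t => (t - a)⁻¹ * (Real.sqrt (u - t))⁻¹) volume x u := by
  have hbig : IntervalIntegrable (fun t => (x - a)⁻¹ * (Real.sqrt (u - t))⁻¹) volume x u :=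
    (sqrtInvRev_intInt x u hxu).const_mul _
  refine hbig.mono_fun ?_ ?_
  · exact (((by fun_prop : Measurable (fun t : ℝ => t - a)).inv).mul
      ((Real.continuous_sqrt.comp (by continuity)).measurable.inv)).aestronglyMeasurable
  · filter_upwards [MeasureTheory.ae_restrict_mem measurableSet_uIoc] with t ht
    rw [Set.uIoc_of_le hxu] at ht
    have h1 : (0:ℝ) < x - a := by linarith
    have h3 : (0:ℝ) < t - a := by linarith [ht.1]
    have h4 : (0:ℝ) ≤ (Real.sqrt (u - t))⁻¹ := by positivity
    rw [Real.norm_eq_abs, Real.norm_eq_abs, abs_of_nonneg (by positivity), abs_of_nonneg (by positivity)]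
    exact mul_le_mul_of_nonneg_right (by
      apply inv_anti₀ h1; linarith [ht.1]) h4

/-- Value of the kernel-2 integral. -/
lemma K2_integral {a x u : ℝ} (hax : a < x) (hxu : x ≤ u) :
    ∫ t in x..u, (t - a)⁻¹ * (Real.sqrt (u - t))⁻¹
      = (Real.sqrt (u - a))⁻¹ *
        (Real.log (Real.sqrt (u - a) + Real.sqrt (u - x))
          - Real.log (Real.sqrt (u - a) - Real.sqrt (u - x))) := by
  have hua : (0:ℝ) < u - a := by linarith
  have hw : (0:ℝ) < Real.sqrt (u - a) := Real.sqrt_pos.mpr hua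
  have hwv : Real.sqrt (u - x) < Real.sqrt (u - a) := by
    apply Real.sqrt_lt_sqrt (by linarith) (by linarith)
  set G : ℝ → ℝ := fun t => (Real.sqrt (u - a))⁻¹ *
      (Real.log (Real.sqrt (u - a) - Real.sqrt (u - t))
        - Real.log (Real.sqrt (u - a) + Real.sqrt (u - t))) with hG
  have key : ∀ t ∈ Set.Ioo x u, HasDerivAt G ((t - a)⁻¹ * (Real.sqrt (u - t))⁻¹) t := by
    intro t ht
    have h2 : (0:ℝ) < u - t := by linarith [ht.2]
    have h3 : (0:ℝ) < t - a := by linarith [ht.1]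
    have hs : (0:ℝ) < Real.sqrt (u - t) := Real.sqrt_pos.mpr h2
    have hws : Real.sqrt (u - t) < Real.sqrt (u - a) := by
      apply Real.sqrt_lt_sqrt (by linarith) (by linarith)
    have ds : HasDerivAt (fun t : ℝ => Real.sqrt (u - t)) (1 / (2 * Real.sqrt (u - t)) * (-1)) t :=
      (Real.hasDerivAt_sqrt (ne_of_gt h2)).comp t ((hasDerivAt_id t).const_sub u)
    have d1 : HasDerivAt (fun t : ℝ => Real.sqrt (u - a) - Real.sqrt (u - t))
        (-(1 / (2 * Real.sqrt (u - t)) * (-1))) t := ds.const_sub _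
    have d2 : HasDerivAt (fun t : ℝ => Real.sqrt (u - a) + Real.sqrt (u - t))
        (1 / (2 * Real.sqrt (u - t)) * (-1)) t := ds.const_add _
    have dl1 := d1.log (sub_pos.mpr hws).ne'
    have dl2 := d2.log (by positivity : (0:ℝ) < Real.sqrt (u - a) + Real.sqrt (u - t)).ne'
    have dd := ((dl1.sub dl2).const_mul ((Real.sqrt (u - a))⁻¹))
    refine dd.congr_deriv ?_
    have hsq : Real.sqrt (u - a) ^ 2 - Real.sqrt (u - t) ^ 2 = t - a := by
      rw [Real.sq_sqrt (le_of_lt hua), Real.sq_sqrt (le_of_lt h2)]; ring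
    have hne1 : Real.sqrt (u - a) - Real.sqrt (u - t) ≠ 0 := (sub_pos.mpr hws).ne'
    have hne2 : Real.sqrt (u - a) + Real.sqrt (u - t) ≠ 0 := by positivity
    field_simp
    linear_combination (-2 * Real.sqrt (u - a)) * hsq
  have cont : ContinuousOn G (Set.Icc x u) := by
    apply ContinuousOn.mul continuousOn_const
    apply ContinuousOn.sub
    · apply ContinuousOn.log
      · fun_prop
      · intro t ht
        have : Real.sqrt (u - t) ≤ Real.sqrt (u - x) := Real.sqrt_le_sqrt (by linarith [ht.1])
        have : Real.sqrt (u - t) < Real.sqrt (u - a) := lt_of_le_of_lt this hwv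
        linarith
    · apply ContinuousOn.log
      · fun_prop
      · intro t ht
        positivity
  have := intervalIntegral.integral_eq_sub_of_hasDeriv_right_of_le hxu cont
    (fun t ht => (key t ht).hasDerivWithinAt) (K2_intInt hax hxu)
  rw [this, hG]
  simp only
  rw [show u - u = 0 by ring, Real.sqrt_zero]
  ring

/-- The key identity `D1 u = √(u-a) * D2 u`. -/
lemma key_identity {a x u : ℝ} (hax : a < x) (hxu : x ≤ u) :
    2 * Real.log (Real.sqrt (u - a) + Real.sqrt (u - x)) - Real.log (x - a)
      = Real.sqrt (u - a) * ((Real.sqrt (u - a))⁻¹ *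
        (Real.log (Real.sqrt (u - a) + Real.sqrt (u - x))
          - Real.log (Real.sqrt (u - a) - Real.sqrt (u - x)))) := by
  have hua : (0:ℝ) < u - a := by linarith
  have hw : (0:ℝ) < Real.sqrt (u - a) := Real.sqrt_pos.mpr hua
  have hwv : Real.sqrt (u - x) < Real.sqrt (u - a) :=
    Real.sqrt_lt_sqrt (by linarith) (by linarith)
  have hv : (0:ℝ) ≤ Real.sqrt (u - x) := Real.sqrt_nonneg _
  have hprod : (Real.sqrt (u - a) + Real.sqrt (u - x)) * (Real.sqrt (u - a) - Real.sqrt (u - x))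
      = x - a := by
    have h1 := Real.sq_sqrt (le_of_lt hua)
    have h2 := Real.sq_sqrt (by linarith : (0:ℝ) ≤ u - x)
    nlinarith
  rw [mul_inv_cancel_left₀ (ne_of_gt hw)]
  have hxa : Real.log (x - a) = Real.log (Real.sqrt (u - a) + Real.sqrt (u - x))
      + Real.log (Real.sqrt (u - a) - Real.sqrt (u - x)) := by
    rw [← hprod, Real.log_mul (by positivity) (sub_pos.mpr hwv).ne']
  rw [hxa]; ring

/-- Fubini swap over the triangle `x ≤ t ≤ u ≤ b`. -/
lemma swap_triangle {x b : ℝ} (F : ℝ → ℝ → ℝ)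
    (hint : Integrable (fun p : ℝ × ℝ => if p.1 < p.2 then F p.1 p.2 else 0)
      ((volume.restrict (Set.Ioc x b)).prod (volume.restrict (Set.Ioc x b)))) :
    ∫ t in Set.Ioc x b, (∫ u in Set.Ioc t b, F t u) = ∫ u in Set.Ioc x b, ∫ t in Set.Ioc x u, F t u := by
  have step1 : ∫ t in Set.Ioc x b, (∫ u in Set.Ioc t b, F t u)
      = ∫ t in Set.Ioc x b, ∫ u in Set.Ioc x b, (if t < u then F t u else 0) := by
    apply MeasureTheory.setIntegral_congr_fun measurableSet_Ioc
    intro t ht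
    have : ∀ u : ℝ, (if t < u then F t u else 0) = Set.indicator (Set.Ioi t) (F t) u := by
      intro u; rw [Set.indicator_apply]; simp [Set.mem_Ioi]
    simp_rw [this]
    rw [MeasureTheory.setIntegral_indicator measurableSet_Ioi]
    rw [Set.Ioc_inter_Ioi, max_eq_right ht.1.le]
  have step2 := MeasureTheory.integral_integral_swap
    (f := fun t u => if t < u then F t u else 0) hint
  have step3 : ∫ u in Set.Ioc x b, (∫ t in Set.Ioc x b, if t < u then F t u else 0)
      = ∫ u in Set.Ioc x b, ∫ t in Set.Ioc x u, F t u := by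
    apply MeasureTheory.setIntegral_congr_fun measurableSet_Ioc
    intro u hu
    have : ∀ t : ℝ, (if t < u then F t u else 0) = Set.indicator (Set.Iio u) (fun t => F t u) t := by
      intro t; rw [Set.indicator_apply]; simp [Set.mem_Iio]
    simp_rw [this]
    rw [MeasureTheory.setIntegral_indicator measurableSet_Iio]
    have h1 : Set.Ioc x b ∩ Set.Iio u = Set.Ioo x u := by
      ext t; simp only [Set.mem_inter_iff, Set.mem_Ioc, Set.mem_Iio, Set.mem_Ioo]
      constructor
      · rintro ⟨⟨h1, h2⟩, h3⟩; exact ⟨h1, h3⟩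
      · rintro ⟨h1, h2⟩; exact ⟨⟨h1, le_trans h2.le hu.2⟩, h2⟩
    rw [h1, ← MeasureTheory.integral_Ioc_eq_integral_Ioo]
  rw [step1, step2, step3]

lemma finite_meas (x b : ℝ) : IsFiniteMeasure (volume.restrict (Set.Ioc x b)) :=
  ⟨by rw [Measure.restrict_apply_univ]; exact measure_Ioc_lt_top⟩

/-- Product integrability for kernel 1. -/
lemma P1 {a x b : ℝ} (f : ℝ → ℝ) (hax : a < x) (hxb : x < b) {M : ℝ}
    (hM : ∀ u ∈ Set.Icc x b, |deriv f u| ≤ M) :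
    Integrable (fun p : ℝ × ℝ => if p.1 < p.2 then
        (Real.sqrt ((p.1 - a) * (p.1 - x)))⁻¹ * deriv f p.2 else 0)
      ((volume.restrict (Set.Ioc x b)).prod (volume.restrict (Set.Ioc x b))) := by
  haveI := finite_meas x b
  set K1 : ℝ → ℝ := fun t => (Real.sqrt ((t - a) * (t - x)))⁻¹ with hK1def
  have hK1meas : Measurable K1 :=
    (Real.continuous_sqrt.comp (by continuity)).measurable.inv
  have hmeas : Measurable (fun p : ℝ × ℝ => if p.1 < p.2 then K1 p.1 * deriv f p.2 else 0) := by
    refine Measurable.ite (measurableSet_lt measurable_fst measurable_snd) ?_ measurable_const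
    exact (hK1meas.comp measurable_fst).mul ((measurable_deriv f).comp measurable_snd)
  have hK1int : IntegrableOn K1 (Set.Ioc x b) volume :=
    (intervalIntegrable_iff_integrableOn_Ioc_of_le hxb.le).mp (K1_intInt hax hxb.le)
  have hbound : Integrable (fun p : ℝ × ℝ => |M| * |K1 p.1|)
      ((volume.restrict (Set.Ioc x b)).prod (volume.restrict (Set.Ioc x b))) := by
    refine (MeasureTheory.integrable_prod_iff
      (((hK1meas.comp measurable_fst).abs.const_mul _).aestronglyMeasurable)).mpr ⟨?_, ?_⟩
    · exact Filter.Eventually.of_forall fun t =>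
        (integrable_const (|M| * |K1 t|)).congr (Filter.Eventually.of_forall fun u => rfl)
    · have hconv : (fun t : ℝ => ∫ u, ‖|M| * |(K1 ∘ Prod.fst) (t, u)|‖ ∂(volume.restrict (Set.Ioc x b)))
          = fun t => ((volume.restrict (Set.Ioc x b)) Set.univ).toReal * (|M| * |K1 t|) := by
        funext t
        simp only [Function.comp_apply]
        rw [MeasureTheory.integral_const, smul_eq_mul, Real.norm_eq_abs,
          abs_of_nonneg (by positivity : (0:ℝ) ≤ |M| * |K1 t|)]
        rfl
      rw [hconv]
      exact (hK1int.abs.const_mul _).const_mul _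
  refine hbound.mono' hmeas.aestronglyMeasurable ?_
  rw [MeasureTheory.Measure.prod_restrict]
  filter_upwards [MeasureTheory.ae_restrict_mem (measurableSet_Ioc.prod measurableSet_Ioc)] with p hp
  rcases hp with ⟨hp1, hp2⟩
  by_cases h : p.1 < p.2
  · simp only [if_pos h, Real.norm_eq_abs, abs_mul]
    have h1 : |deriv f p.2| ≤ |M| :=
      le_trans (hM p.2 ⟨hp2.1.le, hp2.2⟩) (le_abs_self M)
    calc |K1 p.1| * |deriv f p.2| ≤ |K1 p.1| * |M| :=
          mul_le_mul_of_nonneg_left h1 (abs_nonneg _)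
      _ = |M| * |K1 p.1| := by ring
  · simp only [if_neg h, norm_zero]
    positivity

/-- Integrability of `(u,t) ↦ 1/√(u-t)` (as indicator of the triangle) on the product. -/
lemma G_int {x b : ℝ} (hxb : x < b) :
    Integrable (fun p : ℝ × ℝ => if p.1 < p.2 then (Real.sqrt (p.2 - p.1))⁻¹ else 0)
      ((volume.restrict (Set.Ioc x b)).prod (volume.restrict (Set.Ioc x b))) := by
  haveI := finite_meas x b
  have hGmeas : Measurable (fun p : ℝ × ℝ => if p.1 < p.2 then (Real.sqrt (p.2 - p.1))⁻¹ else 0) := by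
    refine Measurable.ite (measurableSet_lt measurable_fst measurable_snd) ?_ measurable_const
    exact (Real.continuous_sqrt.comp (continuous_snd.sub continuous_fst)).measurable.inv
  refine (MeasureTheory.integrable_prod_iff hGmeas.aestronglyMeasurable).mpr ⟨?_, ?_⟩
  · filter_upwards [MeasureTheory.ae_restrict_mem measurableSet_Ioc] with t ht
    have heq : (fun u => if t < u then (Real.sqrt (u - t))⁻¹ else 0)
        = Set.indicator (Set.Ioi t) (fun u => (Real.sqrt (u - t))⁻¹) := by
      funext u; rw [Set.indicator_apply]; simp [Set.mem_Ioi]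
    rw [heq, MeasureTheory.integrable_indicator_iff measurableSet_Ioi]
    rw [IntegrableOn, Measure.restrict_restrict measurableSet_Ioi]
    have : Set.Ioi t ∩ Set.Ioc x b = Set.Ioc t b := by
      ext u; simp only [Set.mem_inter_iff, Set.mem_Ioi, Set.mem_Ioc]
      constructor
      · rintro ⟨h1, h2, h3⟩; exact ⟨h1, h3⟩
      · rintro ⟨h1, h2⟩; exact ⟨h1, lt_trans ht.1 h1, h2⟩
    rw [this]
    exact (intervalIntegrable_iff_integrableOn_Ioc_of_le ht.2).mp (sqrtInv_intInt t b ht.2)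
  · refine Integrable.mono' (integrable_const (2 * Real.sqrt (b - x)))
      (((hGmeas.aestronglyMeasurable).norm).integral_prod_right') ?_
    filter_upwards [MeasureTheory.ae_restrict_mem measurableSet_Ioc] with t ht
    have heq : (fun u => ‖if t < u then (Real.sqrt (u - t))⁻¹ else 0‖)
        = Set.indicator (Set.Ioi t) (fun u => (Real.sqrt (u - t))⁻¹) := by
      funext u
      rw [Set.indicator_apply]
      by_cases h : t < u
      · simp only [Set.mem_Ioi, if_pos h, h, if_true, Real.norm_eq_abs]
        exact abs_of_nonneg (by positivity)
      · simp [Set.mem_Ioi, h]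
    have hval : ∫ u, ‖if t < u then (Real.sqrt (u - t))⁻¹ else 0‖ ∂(volume.restrict (Set.Ioc x b))
        = 2 * Real.sqrt (b - t) := by
      rw [heq, MeasureTheory.integral_indicator measurableSet_Ioi,
        Measure.restrict_restrict measurableSet_Ioi]
      have h1 : Set.Ioi t ∩ Set.Ioc x b = Set.Ioc t b := by
        ext u; simp only [Set.mem_inter_iff, Set.mem_Ioi, Set.mem_Ioc]
        constructor
        · rintro ⟨h1, h2, h3⟩; exact ⟨h1, h3⟩
        · rintro ⟨h1, h2⟩; exact ⟨h1, lt_trans ht.1 h1, h2⟩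
      rw [h1, ← intervalIntegral.integral_of_le ht.2]
      exact sqrtInv_integral t b ht.2
    rw [Real.norm_eq_abs, abs_of_nonneg (by positivity : (0:ℝ) ≤ ∫ u, ‖if t < u then (Real.sqrt (u - t))⁻¹ else 0‖ ∂(volume.restrict (Set.Ioc x b))), hval]
    have : Real.sqrt (b - t) ≤ Real.sqrt (b - x) := Real.sqrt_le_sqrt (by linarith [ht.1])
    linarith

/-- Product integrability for kernel 2. -/
lemma P2 {a x b : ℝ} (f : ℝ → ℝ) (hax : a < x) (hxb : x < b) {M : ℝ}
    (hM : ∀ u ∈ Set.Icc x b, |deriv f u| ≤ M) :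
    Integrable (fun p : ℝ × ℝ => if p.1 < p.2 then
        (p.1 - a)⁻¹ * (Real.sqrt (p.2 - a) * deriv f p.2 * (Real.sqrt (p.2 - p.1))⁻¹) else 0)
      ((volume.restrict (Set.Ioc x b)).prod (volume.restrict (Set.Ioc x b))) := by
  haveI := finite_meas x b
  have hmeas : Measurable (fun p : ℝ × ℝ => if p.1 < p.2 then
      (p.1 - a)⁻¹ * (Real.sqrt (p.2 - a) * deriv f p.2 * (Real.sqrt (p.2 - p.1))⁻¹) else 0) := by
    refine Measurable.ite (measurableSet_lt measurable_fst measurable_snd) ?_ measurable_const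
    refine Measurable.mul ?_ ?_
    · exact ((continuous_fst.sub continuous_const).measurable).inv
    · exact (((Real.continuous_sqrt.comp (continuous_snd.sub continuous_const)).measurable).mul
        ((measurable_deriv f).comp measurable_snd)).mul
        ((Real.continuous_sqrt.comp (continuous_snd.sub continuous_fst)).measurable.inv)
  set C : ℝ := (x - a)⁻¹ * Real.sqrt (b - a) * |M| with hC
  have hxa0 : (0:ℝ) < x - a := by linarith
  have hC0 : 0 ≤ C := by positivity
  refine ((G_int hxb).const_mul C).mono' hmeas.aestronglyMeasurable ?_
  rw [MeasureTheory.Measure.prod_restrict]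
  filter_upwards [MeasureTheory.ae_restrict_mem (measurableSet_Ioc.prod measurableSet_Ioc)] with p hp
  rcases hp with ⟨hp1, hp2⟩
  by_cases h : p.1 < p.2
  · simp only [if_pos h, Real.norm_eq_abs]
    have ht1 : (0:ℝ) < p.1 - a := by linarith [hp1.1]
    have hs : (0:ℝ) ≤ (Real.sqrt (p.2 - p.1))⁻¹ := by positivity
    rw [abs_mul, abs_mul, abs_mul]
    rw [abs_of_nonneg (inv_nonneg.mpr ht1.le),
      abs_of_nonneg (Real.sqrt_nonneg _), abs_of_nonneg hs]
    have h1 : (p.1 - a)⁻¹ ≤ (x - a)⁻¹ := inv_anti₀ (by linarith) (by linarith [hp1.1])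
    have h2 : Real.sqrt (p.2 - a) ≤ Real.sqrt (b - a) := Real.sqrt_le_sqrt (by linarith [hp2.2])
    have h3 : |deriv f p.2| ≤ |M| := le_trans (hM p.2 ⟨hp2.1.le, hp2.2⟩) (le_abs_self M)
    calc (p.1 - a)⁻¹ * (Real.sqrt (p.2 - a) * |deriv f p.2| * (Real.sqrt (p.2 - p.1))⁻¹)
        ≤ (x - a)⁻¹ * (Real.sqrt (b - a) * |M| * (Real.sqrt (p.2 - p.1))⁻¹) := by
          apply mul_le_mul h1 ?_ (by positivity) (by positivity)
          apply mul_le_mul_of_nonneg_right ?_ hs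
          exact mul_le_mul h2 h3 (abs_nonneg _) (Real.sqrt_nonneg _)
      _ = C * (Real.sqrt (p.2 - p.1))⁻¹ := by rw [hC]; ring
  · simp only [if_neg h, norm_zero, mul_zero]
    exact le_refl 0

/-- Lemma 4.2 (Convolution1b): for `a < 0`, `f` differentiable on `(a,1)` with
locally bounded derivative, `ε > 0` and `a < x < 1 - ε`,
`∫_x^{1-ε} f(t)/√((t-a)(t-x)) dt
  = ∫_x^{1-ε} (1/(t-a)) (√(1-a-ε)·f(1-ε)/√(1-t-ε) - ∫_t^{1-ε} √(u-a)·f'(u)/√(u-t) du) dt`. -/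
theorem stmt_1 (a : ℝ) (ha : a < 0) (f : ℝ → ℝ)
    (hdiff : ∀ t ∈ Set.Ioo a 1, DifferentiableAt ℝ f t)
    (hbdd : ∀ p q : ℝ, a < p → q < 1 →
      ∃ M : ℝ, ∀ t ∈ Set.Icc p q, |deriv f t| ≤ M)
    (ε : ℝ) (hε0 : 0 < ε)
    (x : ℝ) (hxa : a < x) (hx1 : x < 1 - ε) :
    (∫ t in x..(1 - ε), f t / Real.sqrt ((t - a) * (t - x))) =
      ∫ t in x..(1 - ε), (t - a)⁻¹ *
        (Real.sqrt (1 - a - ε) * f (1 - ε) / Real.sqrt (1 - t - ε)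
          - ∫ u in t..(1 - ε), Real.sqrt (u - a) * deriv f u / Real.sqrt (u - t)) := by
  set b : ℝ := 1 - ε with hbdef
  have hxb : x < b := hx1
  have hb1 : b < 1 := by rw [hbdef]; linarith
  have hab : a < b := lt_trans hxa hxb
  obtain ⟨M, hM⟩ := hbdd x b hxa hb1
  haveI := finite_meas x b
  have hsub : Set.Icc x b ⊆ Set.Ioo a 1 := fun t ht =>
    ⟨lt_of_lt_of_le hxa ht.1, lt_of_le_of_lt ht.2 hb1⟩
  have hfc : ContinuousOn f (Set.Icc x b) := fun t ht =>
    ((hdiff t (hsub ht)).continuousAt).continuousWithinAt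
  obtain ⟨Cf, hCf⟩ := isCompact_Icc.exists_bound_of_continuousOn hfc
  have hdfii : ∀ t ∈ Set.Icc x b, IntervalIntegrable (deriv f) volume t b := by
    intro t ht
    rw [intervalIntegrable_iff_integrableOn_Ioc_of_le ht.2]
    refine Integrable.mono' (integrable_const |M|) ((measurable_deriv f).aestronglyMeasurable) ?_
    filter_upwards [MeasureTheory.ae_restrict_mem measurableSet_Ioc] with u hu
    rw [Real.norm_eq_abs]
    exact le_trans (hM u ⟨le_trans ht.1 hu.1.le, hu.2⟩) (le_abs_self M)
  have hFTC : ∀ t ∈ Set.Icc x b, ∫ u in Set.Ioc t b, deriv f u = f b - f t := by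
    intro t ht
    rw [← intervalIntegral.integral_of_le ht.2]
    apply intervalIntegral.integral_eq_sub_of_hasDerivAt
    · intro u hu
      rw [Set.uIcc_of_le ht.2] at hu
      exact (hdiff u (hsub ⟨le_trans ht.1 hu.1, hu.2⟩)).hasDerivAt
    · exact hdfii t ht
  have hK1meas : Measurable (fun t : ℝ => (Real.sqrt ((t - a) * (t - x)))⁻¹) :=
    (Real.continuous_sqrt.comp (by continuity)).measurable.inv
  have hK1int : IntegrableOn (fun t : ℝ => (Real.sqrt ((t - a) * (t - x)))⁻¹)
      (Set.Ioc x b) volume :=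
    (intervalIntegrable_iff_integrableOn_Ioc_of_le hxb.le).mp (K1_intInt hxa hxb.le)
  have hfK1 : Integrable (fun t => f t * (Real.sqrt ((t - a) * (t - x)))⁻¹)
      (volume.restrict (Set.Ioc x b)) := by
    refine Integrable.mono' (hK1int.abs.const_mul Cf) ?_ ?_
    · exact ((hfc.mono Set.Ioc_subset_Icc_self).aestronglyMeasurable measurableSet_Ioc).mul
        hK1meas.aestronglyMeasurable
    · filter_upwards [MeasureTheory.ae_restrict_mem measurableSet_Ioc] with t ht
      rw [Real.norm_eq_abs, abs_mul]
      exact mul_le_mul_of_nonneg_right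
        (by simpa [Real.norm_eq_abs] using hCf t (Set.Ioc_subset_Icc_self ht)) (abs_nonneg _)
  have hbK1 : Integrable (fun t => f b * (Real.sqrt ((t - a) * (t - x)))⁻¹)
      (volume.restrict (Set.Ioc x b)) := hK1int.const_mul _
  -- LHS computation
  have hLHS : (∫ t in x..b, f t / Real.sqrt ((t - a) * (t - x)))
      = f b * (2 * Real.log (Real.sqrt (b - a) + Real.sqrt (b - x)) - Real.log (x - a))
        - ∫ u in Set.Ioc x b, deriv f u *
            (2 * Real.log (Real.sqrt (u - a) + Real.sqrt (u - x)) - Real.log (x - a)) := by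
    rw [intervalIntegral.integral_of_le hxb.le]
    have e1 : ∫ t in Set.Ioc x b, f t / Real.sqrt ((t - a) * (t - x))
        = ∫ t in Set.Ioc x b, (f b * (Real.sqrt ((t - a) * (t - x)))⁻¹
            - (f b - f t) * (Real.sqrt ((t - a) * (t - x)))⁻¹) :=
      MeasureTheory.setIntegral_congr_fun measurableSet_Ioc
        (fun t _ => by beta_reduce; rw [div_eq_mul_inv]; ring)
    have hint2 : Integrable (fun t => (f b - f t) * (Real.sqrt ((t - a) * (t - x)))⁻¹)
        (volume.restrict (Set.Ioc x b)) :=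
      (hbK1.sub hfK1).congr (Filter.Eventually.of_forall fun t => by simp only [Pi.sub_apply]; ring)
    rw [e1, MeasureTheory.integral_sub hbK1 hint2]
    congr 1
    · rw [MeasureTheory.integral_const_mul]
      congr 1
      rw [← intervalIntegral.integral_of_le hxb.le]
      exact K1_integral hxa hxb.le
    · have e2 : ∫ t in Set.Ioc x b, (f b - f t) * (Real.sqrt ((t - a) * (t - x)))⁻¹
          = ∫ t in Set.Ioc x b, ∫ u in Set.Ioc t b,
              (Real.sqrt ((t - a) * (t - x)))⁻¹ * deriv f u := by
        apply MeasureTheory.setIntegral_congr_fun measurableSet_Ioc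
        intro t ht
        beta_reduce
        rw [MeasureTheory.integral_const_mul, hFTC t (Set.Ioc_subset_Icc_self ht)]
        ring
      rw [e2, swap_triangle (fun t u => (Real.sqrt ((t - a) * (t - x)))⁻¹ * deriv f u)
        (P1 f hxa hxb hM)]
      apply MeasureTheory.setIntegral_congr_fun measurableSet_Ioc
      intro u hu
      beta_reduce
      rw [MeasureTheory.integral_mul_const, ← intervalIntegral.integral_of_le hu.1.le,
        K1_integral hxa hu.1.le]
      ring
  -- RHS computation
  have hJrw : ∀ t ∈ Set.Ioc x b,
      (t - a)⁻¹ * (∫ u in t..b, Real.sqrt (u - a) * deriv f u / Real.sqrt (u - t))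
        = ∫ u in Set.Ioc t b, (t - a)⁻¹ *
            (Real.sqrt (u - a) * deriv f u * (Real.sqrt (u - t))⁻¹) := by
    intro t ht
    rw [intervalIntegral.integral_of_le ht.2, ← MeasureTheory.integral_const_mul]
    apply MeasureTheory.setIntegral_congr_fun measurableSet_Ioc
    intro u _
    beta_reduce
    rw [div_eq_mul_inv]
  have hH2 : Integrable (fun t => (t - a)⁻¹ *
      (∫ u in t..b, Real.sqrt (u - a) * deriv f u / Real.sqrt (u - t)))
      (volume.restrict (Set.Ioc x b)) := by
    have hg := (P2 f hxa hxb hM).integral_prod_left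
    refine hg.congr ?_
    filter_upwards [MeasureTheory.ae_restrict_mem measurableSet_Ioc] with t ht
    rw [hJrw t ht]
    have heq : (fun u => if t < u then (t - a)⁻¹ *
        (Real.sqrt (u - a) * deriv f u * (Real.sqrt (u - t))⁻¹) else 0)
        = Set.indicator (Set.Ioi t) (fun u => (t - a)⁻¹ *
            (Real.sqrt (u - a) * deriv f u * (Real.sqrt (u - t))⁻¹)) := by
      funext u
      by_cases h : t < u
      · rw [Set.indicator_of_mem (Set.mem_Ioi.mpr h), if_pos h]
      · rw [Set.indicator_of_notMem (fun hc => h (Set.mem_Ioi.mp hc)), if_neg h]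
    show ∫ u, (if t < u then _ else 0) ∂(volume.restrict (Set.Ioc x b)) = _
    rw [heq, MeasureTheory.integral_indicator measurableSet_Ioi,
      Measure.restrict_restrict measurableSet_Ioi]
    have hset : Set.Ioi t ∩ Set.Ioc x b = Set.Ioc t b := by
      ext u; simp only [Set.mem_inter_iff, Set.mem_Ioi, Set.mem_Ioc]
      constructor
      · rintro ⟨h1, _, h3⟩; exact ⟨h1, h3⟩
      · rintro ⟨h1, h2⟩; exact ⟨h1, lt_trans ht.1 h1, h2⟩
    rw [hset]
  have hK2b : IntegrableOn (fun t : ℝ => (t - a)⁻¹ * (Real.sqrt (b - t))⁻¹)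
      (Set.Ioc x b) volume :=
    (intervalIntegrable_iff_integrableOn_Ioc_of_le hxb.le).mp (K2_intInt hxa hxb.le)
  have hRHS : (∫ t in x..b, (t - a)⁻¹ *
        (Real.sqrt (1 - a - ε) * f b / Real.sqrt (1 - t - ε)
          - ∫ u in t..b, Real.sqrt (u - a) * deriv f u / Real.sqrt (u - t)))
      = Real.sqrt (b - a) * f b * ((Real.sqrt (b - a))⁻¹ *
          (Real.log (Real.sqrt (b - a) + Real.sqrt (b - x))
            - Real.log (Real.sqrt (b - a) - Real.sqrt (b - x))))
        - ∫ u in Set.Ioc x b, deriv f u * (Real.sqrt (u - a) * ((Real.sqrt (u - a))⁻¹ *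
            (Real.log (Real.sqrt (u - a) + Real.sqrt (u - x))
              - Real.log (Real.sqrt (u - a) - Real.sqrt (u - x))))) := by
    rw [intervalIntegral.integral_of_le hxb.le]
    have e1 : ∫ t in Set.Ioc x b, (t - a)⁻¹ *
          (Real.sqrt (1 - a - ε) * f b / Real.sqrt (1 - t - ε)
            - ∫ u in t..b, Real.sqrt (u - a) * deriv f u / Real.sqrt (u - t))
        = ∫ t in Set.Ioc x b, ((Real.sqrt (b - a) * f b) * ((t - a)⁻¹ * (Real.sqrt (b - t))⁻¹)
            - (t - a)⁻¹ * (∫ u in t..b, Real.sqrt (u - a) * deriv f u / Real.sqrt (u - t))) := by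
      apply MeasureTheory.setIntegral_congr_fun measurableSet_Ioc
      intro t _
      beta_reduce
      rw [show (1:ℝ) - a - ε = b - a by rw [hbdef]; ring,
        show (1:ℝ) - t - ε = b - t by rw [hbdef]; ring, div_eq_mul_inv]
      ring
    rw [e1, MeasureTheory.integral_sub (hK2b.const_mul _) hH2]
    congr 1
    · rw [MeasureTheory.integral_const_mul]
      congr 1
      rw [← intervalIntegral.integral_of_le hxb.le]
      exact K2_integral hxa hxb.le
    · have e2 : ∫ t in Set.Ioc x b, (t - a)⁻¹ *
            (∫ u in t..b, Real.sqrt (u - a) * deriv f u / Real.sqrt (u - t))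
          = ∫ t in Set.Ioc x b, ∫ u in Set.Ioc t b, (t - a)⁻¹ *
              (Real.sqrt (u - a) * deriv f u * (Real.sqrt (u - t))⁻¹) :=
        MeasureTheory.setIntegral_congr_fun measurableSet_Ioc hJrw
      rw [e2, swap_triangle (fun t u => (t - a)⁻¹ *
          (Real.sqrt (u - a) * deriv f u * (Real.sqrt (u - t))⁻¹)) (P2 f hxa hxb hM)]
      apply MeasureTheory.setIntegral_congr_fun measurableSet_Ioc
      intro u hu
      beta_reduce
      have e3 : ∫ t in Set.Ioc x u, (t - a)⁻¹ *
            (Real.sqrt (u - a) * deriv f u * (Real.sqrt (u - t))⁻¹)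
          = ∫ t in Set.Ioc x u, (Real.sqrt (u - a) * deriv f u) *
              ((t - a)⁻¹ * (Real.sqrt (u - t))⁻¹) :=
        MeasureTheory.setIntegral_congr_fun measurableSet_Ioc (fun t _ => by ring)
      rw [e3, MeasureTheory.integral_const_mul, ← intervalIntegral.integral_of_le hu.1.le,
        K2_integral hxa hu.1.le]
      ring
  rw [hLHS, hRHS]
  congr 1
  · rw [key_identity hxa hxb.le]
    ring
  · apply MeasureTheory.setIntegral_congr_fun measurableSet_Ioc
    intro u hu
    beta_reduce
    rw [key_identity hxa hu.1.le]
end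

section
/- Let a < 0 < x, c > 1, ε > 0 with x < 1 − ε and a·c < x, and let f : (a,1) → ℝ be differentiable with derivative bounded on every compact subinterval of (a,1). Then ∫_x^{1−ε} t·H_{w3}(x/t)·f(t)/((x−c·t)·√(t·(t−a))) dt = (x/c)·∫_x^{1−ε} H_{w3}(x/t)·f(t)/((x−c·t)·√(t·(t−a))) dt − (1/c)·∫_x^{1−ε} (1/t)·( ∫_t^{1−ε} f(u)/√((u−a)(u−t)) du ) dt. -/
open Real MeasureTheory intervalIntegral Set

/-- The weight-one iterated integral `H_{w₃}(y) = ∫_y^1 dt/(t·√(1-t))`. -/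
noncomputable def Hw3 (y : ℝ) : ℝ := ∫ t in y..1, (t * Real.sqrt (1 - t))⁻¹

lemma rpow_half_of_nonpos {w : ℝ} (hw : w ≤ 0) : w ^ ((1:ℝ)/2) = 0 := by
  rcases eq_or_lt_of_le hw with h | h
  · rw [h, Real.zero_rpow (by norm_num)]
  · rw [Real.rpow_def_of_neg h]
    have : Real.cos ((1:ℝ)/2 * Real.pi) = 0 := by
      rw [show (1:ℝ)/2 * Real.pi = Real.pi/2 by ring, Real.cos_pi_div_two]
    rw [this, mul_zero]

lemma rpow_neg_half_of_nonpos {w : ℝ} (hw : w ≤ 0) : w ^ (-(1:ℝ)/2) = 0 := by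
  rcases eq_or_lt_of_le hw with h | h
  · rw [h, Real.zero_rpow (by norm_num)]
  · rw [Real.rpow_def_of_neg h]
    have : Real.cos (-(1:ℝ)/2 * Real.pi) = 0 := by
      rw [show (-(1:ℝ)/2 * Real.pi) = -(Real.pi/2) by ring, Real.cos_neg, Real.cos_pi_div_two]
    rw [this, mul_zero]

lemma rpow_neg_half_of_pos {w : ℝ} (hw : 0 < w) : w ^ (-(1:ℝ)/2) = (Real.sqrt w)⁻¹ := by
  rw [show (-(1:ℝ)/2) = -(1/2 : ℝ) by ring, Real.rpow_neg hw.le, Real.sqrt_eq_rpow]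

lemma sqrtint_integrable {x u : ℝ} (hx : 0 < x) (hxu : x ≤ u) :
    IntervalIntegrable (fun s => (s * Real.sqrt (u - s))⁻¹) volume x u := by
  have hdom : IntervalIntegrable (fun s => x⁻¹ * (u - s) ^ (-(1/2) : ℝ)) volume x u := by
    have h := (intervalIntegral.intervalIntegrable_rpow'
      (a := u - x) (b := 0) (r := -(1/2)) (by norm_num)).comp_sub_left u
    simpa using h.const_mul x⁻¹
  apply hdom.mono_fun
  · apply Measurable.aestronglyMeasurable
    fun_prop
  · rw [Filter.EventuallyLE, ae_restrict_iff' measurableSet_uIoc]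
    refine Filter.Eventually.of_forall (fun s hs => ?_)
    rw [Set.uIoc_of_le hxu] at hs
    obtain ⟨hs1, hs2⟩ := hs
    have hs0 : 0 < s := hx.trans hs1
    rcases eq_or_lt_of_le hs2 with h | h
    · have : u - s = 0 := by rw [h]; ring
      simp [this, Real.norm_eq_abs, abs_nonneg]
    · have hus : 0 < u - s := by linarith
      have h1 : (u - s) ^ (-(1/2) : ℝ) = (Real.sqrt (u - s))⁻¹ := by
        rw [Real.rpow_neg hus.le, Real.sqrt_eq_rpow]
      rw [Real.norm_eq_abs, Real.norm_eq_abs, abs_of_nonneg, abs_of_nonneg, h1, mul_inv]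
      · gcongr
      · positivity
      · positivity

lemma J_eq {x u : ℝ} (hx : 0 < x) (hxu : x ≤ u) :
    ∫ s in x..u, (s * Real.sqrt (u - s))⁻¹
      = (Real.sqrt u)⁻¹ * (2 * Real.log (Real.sqrt u + Real.sqrt (u - x)) - Real.log x) := by
  have hu : 0 < u := hx.trans_le hxu
  set F : ℝ → ℝ := fun s => (Real.sqrt u)⁻¹ * (Real.log s - 2 * Real.log (Real.sqrt u + Real.sqrt (u - s))) with hF
  have hcont : ContinuousOn F (Icc x u) := by
    apply ContinuousOn.mul continuousOn_const
    apply ContinuousOn.sub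
    · exact Real.continuousOn_log.mono (fun s hs => by
        simp only [mem_compl_iff, mem_singleton_iff]
        exact ne_of_gt (hx.trans_le hs.1))
    · apply ContinuousOn.mul continuousOn_const
      apply ContinuousOn.log
      · exact (continuous_const.add ((continuous_const.sub continuous_id).sqrt)).continuousOn
      · intro s hs
        have : 0 ≤ Real.sqrt (u - s) := Real.sqrt_nonneg _
        have : 0 < Real.sqrt u := Real.sqrt_pos.mpr hu
        positivity
  have hderiv : ∀ s ∈ Ioo x u, HasDerivAt F ((s * Real.sqrt (u - s))⁻¹) s := by
    intro s hs
    have hs0 : 0 < s := hx.trans hs.1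
    have hus : 0 < u - s := by linarith [hs.2]
    have hsqu : 0 < Real.sqrt u := Real.sqrt_pos.mpr hu
    have hsqus : 0 < Real.sqrt (u - s) := Real.sqrt_pos.mpr hus
    have h2 : HasDerivAt (fun s => Real.sqrt (u - s)) (-(1 / (2 * Real.sqrt (u - s)))) s := by
      have := (Real.hasDerivAt_sqrt (ne_of_gt hus)).comp s ((hasDerivAt_id s).const_sub u)
      exact this.congr_deriv (by ring)
    have h3 : HasDerivAt (fun s => Real.sqrt u + Real.sqrt (u - s)) (-(1 / (2 * Real.sqrt (u - s)))) s :=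
      h2.const_add _
    have h4 : HasDerivAt (fun s => Real.log (Real.sqrt u + Real.sqrt (u - s)))
        ((-(1 / (2 * Real.sqrt (u - s)))) / (Real.sqrt u + Real.sqrt (u - s))) s :=
      h3.log (by positivity)
    have h5 : HasDerivAt F ((Real.sqrt u)⁻¹ * (s⁻¹ - 2 * ((-(1 / (2 * Real.sqrt (u - s)))) / (Real.sqrt u + Real.sqrt (u - s))))) s :=
      (((Real.hasDerivAt_log (ne_of_gt hs0)).sub (h4.const_mul 2))).const_mul _
    convert h5 using 1
    have hA : Real.sqrt u * Real.sqrt u = u := Real.mul_self_sqrt hu.le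
    have hB : Real.sqrt (u - s) * Real.sqrt (u - s) = u - s := Real.mul_self_sqrt hus.le
    have hAB : 0 < Real.sqrt u + Real.sqrt (u - s) := by positivity
    field_simp
    linear_combination hA - hB
  have key := intervalIntegral.integral_eq_sub_of_hasDeriv_right_of_le hxu hcont
    (fun s hs => (hderiv s hs).hasDerivWithinAt) (sqrtint_integrable hx hxu)
  rw [key]
  have : u - u = 0 := by ring
  rw [hF]
  simp only [this, Real.sqrt_zero, add_zero]
  rw [Real.log_sqrt hu.le]
  ring

lemma Hw3_eq {y : ℝ} (hy0 : 0 < y) (hy1 : y ≤ 1) :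
    Hw3 y = 2 * Real.log (1 + Real.sqrt (1 - y)) - Real.log y := by
  rw [Hw3, J_eq hy0 hy1]
  simp [Real.sqrt_one]

lemma Hw3_div {x u : ℝ} (hx : 0 < x) (hxu : x < u) :
    Hw3 (x / u) = Real.sqrt u * ∫ s in x..u, (s * Real.sqrt (u - s))⁻¹ := by
  have hu : 0 < u := hx.trans hxu
  have hsqu : 0 < Real.sqrt u := Real.sqrt_pos.mpr hu
  rw [J_eq hx hxu.le, Hw3_eq (div_pos hx hu) ((div_le_one hu).mpr hxu.le)]
  rw [← mul_assoc, mul_inv_cancel₀ (ne_of_gt hsqu), one_mul]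
  have h1 : 1 - x / u = (u - x) / u := by field_simp
  have h2 : Real.sqrt ((u - x) / u) = Real.sqrt (u - x) / Real.sqrt u :=
    Real.sqrt_div (by linarith) u
  have h3 : 1 + Real.sqrt (u - x) / Real.sqrt u
      = (Real.sqrt u + Real.sqrt (u - x)) / Real.sqrt u := by field_simp
  rw [h1, h2, h3, Real.log_div (by positivity) (ne_of_gt hsqu), Real.log_sqrt hu.le,
    Real.log_div (ne_of_gt hx) (ne_of_gt hu)]
  ring

lemma key {a x b : ℝ} (ha : a < 0) (hx : 0 < x) (hxb : x < b) (f : ℝ → ℝ)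
    (hfc : ContinuousOn f (Icc x b)) :
    (∫ t in x..b, Hw3 (x / t) * f t / Real.sqrt (t * (t - a)))
      = ∫ t in x..b, t⁻¹ * ∫ u in t..b, f u / Real.sqrt ((u - a) * (u - t)) := by
  obtain ⟨M, hM⟩ := isCompact_Icc.exists_bound_of_continuousOn hfc
  have hM0 : 0 ≤ M := le_trans (norm_nonneg _) (hM x ⟨le_refl x, hxb.le⟩)
  set g : ℝ × ℝ → ℝ :=
    fun p => if p.1 < p.2 then p.1⁻¹ * (f p.2 / Real.sqrt ((p.2 - a) * (p.2 - p.1))) else 0 with hg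
  set D : ℝ := x⁻¹ * (M * (Real.sqrt (x - a))⁻¹) with hD
  have hxa : 0 < x - a := by linarith
  have hD0 : 0 ≤ D := by positivity
  have hbound : ∀ s u : ℝ, s ∈ Icc x b → u ∈ Icc x b →
      ‖g (s, u)‖ ≤ D * (u - s) ^ (-(1:ℝ)/2) := by
    intro s u hs hu
    by_cases h : s < u
    · have hs0 : 0 < s := lt_of_lt_of_le hx hs.1
      have hu0 : 0 < u := lt_of_lt_of_le hx hu.1
      have hua : 0 < u - a := by linarith [hu.1]
      have hus : 0 < u - s := by linarith
      have e1 : g (s, u) = s⁻¹ * (f u * ((Real.sqrt (u - a))⁻¹ * (Real.sqrt (u - s))⁻¹)) := by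
        rw [hg]
        simp only [if_pos h]
        rw [Real.sqrt_mul hua.le, div_eq_mul_inv, mul_inv]
      rw [e1, rpow_neg_half_of_pos hus, norm_mul, norm_mul, norm_mul]
      have h1 : ‖s⁻¹‖ = s⁻¹ := Real.norm_of_nonneg (by positivity)
      have h2 : ‖(Real.sqrt (u - a))⁻¹‖ = (Real.sqrt (u - a))⁻¹ :=
        Real.norm_of_nonneg (by positivity)
      have h3 : ‖(Real.sqrt (u - s))⁻¹‖ = (Real.sqrt (u - s))⁻¹ :=
        Real.norm_of_nonneg (by positivity)
      rw [h1, h2, h3]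
      have hDrw : D * (Real.sqrt (u - s))⁻¹
          = x⁻¹ * (M * ((Real.sqrt (x - a))⁻¹ * (Real.sqrt (u - s))⁻¹)) := by rw [hD]; ring
      rw [hDrw]
      have hsx : s⁻¹ ≤ x⁻¹ := by
        apply inv_anti₀ hx hs.1
      have hfu : ‖f u‖ ≤ M := hM u hu
      have hsa : (Real.sqrt (u - a))⁻¹ ≤ (Real.sqrt (x - a))⁻¹ := by
        apply inv_anti₀ (Real.sqrt_pos.mpr hxa)
        exact Real.sqrt_le_sqrt (by linarith [hu.1])
      gcongr
    · have : g (s, u) = 0 := by rw [hg]; simp only [if_neg h]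
      rw [this, rpow_neg_half_of_nonpos (by linarith [not_lt.mp h]), norm_zero, mul_zero]
  have hprodrw : (volume.restrict (Ioo x b)).prod (volume.restrict (Ioo x b))
      = (volume.prod volume).restrict ((Ioo x b) ×ˢ (Ioo x b)) :=
    Measure.prod_restrict _ _
  have hfsnd : AEStronglyMeasurable (fun p : ℝ × ℝ => f p.2)
      ((volume.restrict (Ioo x b)).prod (volume.restrict (Ioo x b))) := by
    rw [hprodrw]
    apply ContinuousOn.aestronglyMeasurable
    · exact (hfc.mono (Ioo_subset_Icc_self)).comp continuous_snd.continuousOn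
        (fun p hp => hp.2)
    · exact (measurableSet_Ioo.prod measurableSet_Ioo)
  have hmeas_aux : Measurable (fun p : ℝ × ℝ =>
      Set.indicator {q : ℝ × ℝ | q.1 < q.2}
        (fun q => q.1⁻¹ * (Real.sqrt ((q.2 - a) * (q.2 - q.1)))⁻¹) p) := by
    apply Measurable.indicator
    · fun_prop
    · exact measurableSet_lt measurable_fst measurable_snd
  have hg_aesm : AEStronglyMeasurable g
      ((volume.restrict (Ioo x b)).prod (volume.restrict (Ioo x b))) := by
    have : g = fun p => (Set.indicator {q : ℝ × ℝ | q.1 < q.2}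
        (fun q => q.1⁻¹ * (Real.sqrt ((q.2 - a) * (q.2 - q.1)))⁻¹) p) * f p.2 := by
      funext p
      simp only [hg, Set.indicator_apply]
      by_cases h : p.1 < p.2
      · rw [if_pos h, if_pos (show p ∈ {q : ℝ × ℝ | q.1 < q.2} from h), div_eq_mul_inv]
        ring
      · rw [if_neg h, if_neg (show p ∉ {q : ℝ × ℝ | q.1 < q.2} from h), zero_mul]
    rw [this]
    exact (hmeas_aux.aestronglyMeasurable).mul hfsnd
  have hdom_int : ∀ s : ℝ, IntegrableOn (fun u => D * (u - s) ^ (-(1:ℝ)/2)) (Ioo x b) volume := by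
    intro s
    have h := (intervalIntegral.intervalIntegrable_rpow'
      (a := x - s) (b := b - s) (r := -(1:ℝ)/2) (by norm_num)).comp_sub_right s
    have h' : IntervalIntegrable (fun u => (u - s) ^ (-(1:ℝ)/2)) volume x b := by
      simpa using h
    exact ((h'.const_mul D).1).mono_set Ioo_subset_Ioc_self
  have hslice : ∀ s ∈ Ioo x b, Integrable (fun u => g (s, u)) (volume.restrict (Ioo x b)) := by
    intro s hs
    apply Integrable.mono' (hdom_int s)
    · have hrw : (fun u => g (s, u)) = Set.indicator (Ioi s)
          (fun u => s⁻¹ * (f u * (Real.sqrt ((u - a) * (u - s)))⁻¹)) := by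
        funext u
        by_cases h : s < u
        · simp only [hg, if_pos h, Set.indicator_of_mem (mem_Ioi.mpr h), div_eq_mul_inv]
        · simp only [hg, if_neg h,
            Set.indicator_of_notMem (fun hc => h (mem_Ioi.mp hc))]
      rw [hrw]
      apply AEStronglyMeasurable.indicator _ measurableSet_Ioi
      apply AEStronglyMeasurable.const_mul
      apply AEStronglyMeasurable.mul
      · exact (hfc.mono Ioo_subset_Icc_self).aestronglyMeasurable measurableSet_Ioo
      · exact Measurable.aestronglyMeasurable (by fun_prop)
    · rw [ae_restrict_iff' measurableSet_Ioo]
      exact Filter.Eventually.of_forall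
        (fun u hu => hbound s u (Ioo_subset_Icc_self hs) (Ioo_subset_Icc_self hu))
  have hC : Integrable (fun s => ∫ u in Ioo x b, ‖g (s, u)‖) (volume.restrict (Ioo x b)) := by
    apply Integrable.mono' (integrable_const (D * (2 * Real.sqrt (b - x))))
    · exact hg_aesm.norm.integral_prod_right'
    · rw [ae_restrict_iff' measurableSet_Ioo]
      refine Filter.Eventually.of_forall (fun s hs => ?_)
      have hint1 : Integrable (fun u => ‖g (s, u)‖) (volume.restrict (Ioo x b)) :=
        (hslice s hs).norm
      have h1 : (∫ u in Ioo x b, ‖g (s, u)‖) ≤ ∫ u in Ioo x b, D * (u - s) ^ (-(1:ℝ)/2) := by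
        exact integral_mono_ae hint1 (hdom_int s)
          ((ae_restrict_iff' measurableSet_Ioo).mpr (Filter.Eventually.of_forall
            (fun u hu => hbound s u (Ioo_subset_Icc_self hs) (Ioo_subset_Icc_self hu))))
      have h2 : (∫ u in Ioo x b, D * ((u - s) ^ (-(1:ℝ)/2))) ≤ D * (2 * Real.sqrt (b - x)) := by
        rw [MeasureTheory.integral_const_mul]
        apply mul_le_mul_of_nonneg_left _ hD0
        have hIioo : (∫ u in Ioo x b, ((u - s) ^ (-(1:ℝ)/2)))
            = ∫ u in x..b, (u - s) ^ (-(1:ℝ)/2) :=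
          ((intervalIntegral.integral_of_le hxb.le).trans integral_Ioc_eq_integral_Ioo).symm
        rw [hIioo, intervalIntegral.integral_comp_sub_right (fun v => v ^ (-(1:ℝ)/2)) s,
          integral_rpow (Or.inl (by norm_num))]
        have he : (-(1:ℝ)/2 + 1) = 1/2 := by norm_num
        rw [he, show ((x - s) ^ ((1:ℝ)/2)) = 0 from rpow_half_of_nonpos (by linarith [hs.1]),
          sub_zero, Real.sqrt_eq_rpow]
        have e2 : (b - s) ^ ((1:ℝ)/2) ≤ (b - x) ^ ((1:ℝ)/2) :=
          Real.rpow_le_rpow (by linarith [hs.2]) (by linarith [hs.1]) (by norm_num)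
        calc (b - s) ^ ((1:ℝ)/2) / (1/2) = 2 * (b - s) ^ ((1:ℝ)/2) := by ring
          _ ≤ 2 * (b - x) ^ ((1/2 : ℝ)) := by linarith
      calc ‖∫ u in Ioo x b, ‖g (s, u)‖‖ = ∫ u in Ioo x b, ‖g (s, u)‖ :=
            Real.norm_of_nonneg (integral_nonneg (fun u => norm_nonneg _))
        _ ≤ D * (2 * Real.sqrt (b - x)) := le_trans h1 h2
  have hint : Integrable g ((volume.restrict (Ioo x b)).prod (volume.restrict (Ioo x b))) := by
    rw [integrable_prod_iff hg_aesm]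
    constructor
    · rw [ae_restrict_iff' measurableSet_Ioo]
      exact Filter.Eventually.of_forall (fun s hs => hslice s hs)
    · exact hC
  have hswap : (∫ s in Ioo x b, ∫ u in Ioo x b, g (s, u))
      = ∫ u in Ioo x b, ∫ s in Ioo x b, g (s, u) :=
    MeasureTheory.integral_integral_swap (f := fun s u => g (s, u)) hint
  have hL : (∫ t in x..b, Hw3 (x / t) * f t / Real.sqrt (t * (t - a)))
      = ∫ u in Ioo x b, ∫ s in Ioo x b, g (s, u) := by
    rw [intervalIntegral.integral_of_le hxb.le, integral_Ioc_eq_integral_Ioo]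
    apply setIntegral_congr_fun measurableSet_Ioo
    intro u hu
    show Hw3 (x / u) * f u / Real.sqrt (u * (u - a)) = ∫ s in Ioo x b, g (s, u)
    symm
    have hu0 : 0 < u := hx.trans hu.1
    have hua : (0:ℝ) ≤ u - a := by linarith [hu.1]
    have hrw : (fun s => g (s, u)) = Set.indicator (Iio u)
        (fun s => s⁻¹ * (f u / Real.sqrt ((u - a) * (u - s)))) := by
      funext s; simp only [hg, Set.indicator_apply, mem_Iio]
    rw [hrw, setIntegral_indicator measurableSet_Iio]
    have hIinter : Ioo x b ∩ Iio u = Ioo x u := by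
      rw [Set.Ioo_inter_Iio, min_eq_right hu.2.le]
    rw [hIinter, ← integral_Ioc_eq_integral_Ioo, ← intervalIntegral.integral_of_le hu.1.le]
    have hcongr : ∀ s ∈ Set.uIcc x u, s⁻¹ * (f u / Real.sqrt ((u - a) * (u - s)))
        = (f u * (Real.sqrt (u - a))⁻¹) * (s * Real.sqrt (u - s))⁻¹ := by
      intro s hs
      rw [Real.sqrt_mul hua, div_eq_mul_inv, mul_inv, mul_inv]
      ring
    rw [intervalIntegral.integral_congr hcongr, intervalIntegral.integral_const_mul,
      Hw3_div hx hu.1, Real.sqrt_mul hu0.le]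
    have hsqu : (0:ℝ) < Real.sqrt u := Real.sqrt_pos.mpr hu0
    have hsqua : (0:ℝ) < Real.sqrt (u - a) := Real.sqrt_pos.mpr (by linarith [hu.1])
    field_simp
  have hR : (∫ t in x..b, t⁻¹ * ∫ u in t..b, f u / Real.sqrt ((u - a) * (u - t)))
      = ∫ s in Ioo x b, ∫ u in Ioo x b, g (s, u) := by
    rw [intervalIntegral.integral_of_le hxb.le, integral_Ioc_eq_integral_Ioo]
    apply setIntegral_congr_fun measurableSet_Ioo
    intro s hs
    show (s⁻¹ * ∫ u in s..b, f u / Real.sqrt ((u - a) * (u - s))) = ∫ u in Ioo x b, g (s, u)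
    symm
    have hrw : (fun u => g (s, u)) = Set.indicator (Ioi s)
        (fun u => s⁻¹ * (f u / Real.sqrt ((u - a) * (u - s)))) := by
      funext u; simp only [hg, Set.indicator_apply, mem_Ioi]
    rw [hrw, setIntegral_indicator measurableSet_Ioi]
    have hIinter : Ioo x b ∩ Ioi s = Ioo s b := by
      rw [Set.Ioo_inter_Ioi, max_eq_right hs.1.le]
    rw [hIinter, ← integral_Ioc_eq_integral_Ioo, ← intervalIntegral.integral_of_le hs.2.le,
      intervalIntegral.integral_const_mul]
  rw [hL, hR]
  exact hswap.symm

lemma Hw3_comp_cont {x b : ℝ} (hx : 0 < x) (hxb : x < b) :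
    ContinuousOn (fun t => Hw3 (x / t)) (Set.Icc x b) := by
  have hc : ContinuousOn
      (fun t => 2 * Real.log (1 + Real.sqrt (1 - x / t)) - Real.log (x / t)) (Set.Icc x b) := by
    have hdivc : ContinuousOn (fun t : ℝ => x / t) (Set.Icc x b) :=
      continuousOn_const.div continuousOn_id (fun t ht => ne_of_gt (hx.trans_le ht.1))
    apply ContinuousOn.sub
    · apply ContinuousOn.mul continuousOn_const
      apply ContinuousOn.log
      · exact continuousOn_const.add ((continuousOn_const.sub hdivc).sqrt)
      · intro t ht
        have h1 : 0 ≤ Real.sqrt (1 - x / t) := Real.sqrt_nonneg _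
        positivity
    · exact ContinuousOn.log hdivc
        (fun t ht => ne_of_gt (div_pos hx (hx.trans_le ht.1)))
  apply hc.congr
  intro t ht
  have ht0 : 0 < t := hx.trans_le ht.1
  exact Hw3_eq (div_pos hx ht0) ((div_le_one ht0).mpr ht.1)

/-- Lemma 4.6 / Eq. (4.10) (Convolution41ii): for `a < 0 < x`, `c > 1`, `ε > 0`,
`x < 1 - ε`, `a·c < x`, and `f` differentiable on `(a,1)` with locally bounded
derivative,
`∫_x^{1-ε} t·H_{w₃}(x/t)·f(t)/((x-ct)·√(t(t-a))) dt
  = (x/c)·∫_x^{1-ε} H_{w₃}(x/t)·f(t)/((x-ct)·√(t(t-a))) dt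
    - (1/c)·∫_x^{1-ε} (1/t)·∫_t^{1-ε} f(u)/√((u-a)(u-t)) du dt`. -/
theorem stmt_5 (a c x ε : ℝ) (ha : a < 0) (hx0 : 0 < x) (hc : 1 < c)
    (hε0 : 0 < ε) (hx1 : x < 1 - ε) (hac : a * c < x) (f : ℝ → ℝ)
    (hdiff : ∀ t ∈ Set.Ioo a 1, DifferentiableAt ℝ f t)
    (hbdd : ∀ p q : ℝ, a < p → q < 1 →
      ∃ M : ℝ, ∀ t ∈ Set.Icc p q, |deriv f t| ≤ M) :
    (∫ t in x..(1 - ε),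
        t * Hw3 (x / t) * f t / ((x - c * t) * Real.sqrt (t * (t - a)))) =
      (x / c) * (∫ t in x..(1 - ε),
          Hw3 (x / t) * f t / ((x - c * t) * Real.sqrt (t * (t - a))))
        - (1 / c) * ∫ t in x..(1 - ε),
            t⁻¹ * ∫ u in t..(1 - ε), f u / Real.sqrt ((u - a) * (u - t)) := by
  set b : ℝ := 1 - ε with hb
  have hxb : x < b := hx1
  have hb1 : b < 1 := by rw [hb]; linarith
  have hax : a < x := lt_trans ha hx0
  have hsub : Set.Icc x b ⊆ Set.Ioo a 1 :=
    fun t ht => ⟨lt_of_lt_of_le hax ht.1, lt_of_le_of_lt ht.2 hb1⟩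
  have hfc : ContinuousOn f (Set.Icc x b) :=
    fun t ht => ((hdiff t (hsub ht)).continuousAt).continuousWithinAt
  have hHc : ContinuousOn (fun t => Hw3 (x / t)) (Set.Icc x b) := Hw3_comp_cont hx0 hxb
  have hSc : ContinuousOn (fun t : ℝ => Real.sqrt (t * (t - a))) (Set.Icc x b) :=
    ((continuousOn_id.mul (continuousOn_id.sub continuousOn_const)).sqrt)
  have hSne : ∀ t ∈ Set.Icc x b, Real.sqrt (t * (t - a)) ≠ 0 := by
    intro t ht
    have h1 : 0 < t := hx0.trans_le ht.1
    have h2 : 0 < t - a := by linarith [ht.1]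
    exact ne_of_gt (Real.sqrt_pos.mpr (mul_pos h1 h2))
  have hDne : ∀ t ∈ Set.Icc x b, (x - c * t) ≠ 0 := by
    intro t ht
    have h1 : x < c * t := by nlinarith [ht.1]
    exact ne_of_lt (by linarith)
  have hi1 : IntervalIntegrable
      (fun t => Hw3 (x / t) * f t / ((x - c * t) * Real.sqrt (t * (t - a)))) volume x b := by
    apply ContinuousOn.intervalIntegrable
    rw [Set.uIcc_of_le hxb.le]
    exact (hHc.mul hfc).div
      ((continuousOn_const.sub (continuousOn_const.mul continuousOn_id)).mul hSc)
      (fun t ht => mul_ne_zero (hDne t ht) (hSne t ht))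
  have hi2 : IntervalIntegrable
      (fun t => Hw3 (x / t) * f t / Real.sqrt (t * (t - a))) volume x b := by
    apply ContinuousOn.intervalIntegrable
    rw [Set.uIcc_of_le hxb.le]
    exact (hHc.mul hfc).div hSc hSne
  have hc0 : (c : ℝ) ≠ 0 := ne_of_gt (lt_trans one_pos hc)
  have hsplit : ∀ t ∈ Set.uIcc x b,
      t * Hw3 (x / t) * f t / ((x - c * t) * Real.sqrt (t * (t - a)))
        = (x / c) * (Hw3 (x / t) * f t / ((x - c * t) * Real.sqrt (t * (t - a))))
          - (1 / c) * (Hw3 (x / t) * f t / Real.sqrt (t * (t - a))) := by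
    intro t ht
    rw [Set.uIcc_of_le hxb.le] at ht
    have h1 := hDne t ht
    have h2 := hSne t ht
    have h1' : x - t * c ≠ 0 := by rwa [mul_comm]
    field_simp
    ring
  rw [intervalIntegral.integral_congr hsplit,
    intervalIntegral.integral_sub (hi1.const_mul _) (hi2.const_mul _),
    intervalIntegral.integral_const_mul, intervalIntegral.integral_const_mul,
    key ha hx0 hxb f hfc]
end

section
/- Let d ≥ 1이 and let f : [0,1] → ℝ be d-times continuously differentiable. Suppose there are real polynomials p_0, …, p_d with p_d not identically zero such that p_d(x)·f^{(d)}(x) + ⋯ + p_1(x)·f′(x) + p_0(x)·f(x) = 0 for all x ∈ [0,1]. Then the sequence n ↦ M[f](n) = ∫_0^1 x^n f(x) dx is P-finite: there exist e ≥ 0, real polynomials q_0, …, q_e not all identically zero, and n_0 ∈ ℕ such that q_e(n)·M[f](n+e) + ⋯ + q_1(n)·M[f](n+1) + q_0(n)·M[f](n) = 0 for all natural numbers n ≥ n_0. -/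
open Polynomial Set Finset MeasureTheory intervalIntegral

private lemma comp_X_add_C_ne_zero (q : Polynomial ℝ) (hq : q ≠ 0) (c : ℝ) :
    q.comp (X + C c) ≠ 0 := by
  intro h
  apply hq
  have h1 : (X + C c : Polynomial ℝ).natDegree = 1 := natDegree_X_add_C c
  have h2 : (q.comp (X + C c)).leadingCoeff = q.leadingCoeff := by
    rw [leadingCoeff_comp (by rw [h1]; exact one_ne_zero), leadingCoeff_X_add_C, one_pow, mul_one]
  rw [h, leadingCoeff_zero] at h2
  exact leadingCoeff_eq_zero.mp h2.symm

private lemma delta_natDegree_lt (b : Polynomial ℝ) (hb : 1 ≤ b.natDegree) :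
    (b.comp (X + C 1) - b).natDegree < b.natDegree := by
  have h1 : (X + C (1:ℝ) : Polynomial ℝ).natDegree = 1 := natDegree_X_add_C 1
  have hcompdeg : (b.comp (X + C 1)).natDegree = b.natDegree := by
    rw [natDegree_comp, h1, mul_one]
  have h3 : (b.comp (X + C 1)).coeff b.natDegree = b.leadingCoeff := by
    conv_lhs => rw [← hcompdeg]
    rw [← leadingCoeff, leadingCoeff_comp (by rw [h1]; exact one_ne_zero),
      leadingCoeff_X_add_C, one_pow, mul_one]
  have hsub : (b.comp (X + C 1) - b).coeff b.natDegree = 0 := by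
    rw [coeff_sub, h3, leadingCoeff, sub_self]
  have hle : (b.comp (X + C 1) - b).natDegree ≤ b.natDegree := by
    exact le_trans (natDegree_sub_le _ _) (max_le (le_of_eq hcompdeg) le_rfl)
  rcases lt_or_eq_of_le hle with h | h
  · exact h
  · by_cases hz : b.comp (X + C 1) - b = 0
    · rw [hz, natDegree_zero]; omega
    · exfalso
      have := mt leadingCoeff_eq_zero.mp hz
      rw [leadingCoeff, h] at this
      exact this hsub

private lemma ibp_aux (G g : ℝ → ℝ) (hG : ContinuousOn G (Icc 0 1))
    (hg : ContinuousOn g (Icc 0 1))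
    (hder : ∀ x ∈ Ioo (0:ℝ) 1, HasDerivAt G (g x) x) (k : ℕ) :
    ∫ x in (0:ℝ)..1, x ^ (k+1) * g x
      = G 1 - ((k:ℝ)+1) * ∫ x in (0:ℝ)..1, x ^ k * G x := by
  have h01 : (0:ℝ) ≤ 1 := zero_le_one
  have hGI : IntervalIntegrable (fun x => ((k:ℝ)+1) * x ^ k * G x) volume 0 1 := by
    refine ContinuousOn.intervalIntegrable_of_Icc h01 ?_
    exact ((continuous_const.mul (continuous_pow k)).continuousOn).mul hG
  have hgI : IntervalIntegrable (fun x => x ^ (k+1) * g x) volume 0 1 := by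
    refine ContinuousOn.intervalIntegrable_of_Icc h01 ?_
    exact (continuous_pow (k+1)).continuousOn.mul hg
  have key : (∫ x in (0:ℝ)..1, (((k:ℝ)+1) * x ^ k * G x + x ^ (k+1) * g x))
      = 1 ^ (k+1) * G 1 - 0 ^ (k+1) * G 0 := by
    refine integral_eq_sub_of_hasDerivAt_of_le h01
      ((continuous_pow (k+1)).continuousOn.mul hG) (fun x hx => ?_) (hGI.add hgI)
    have h1 : HasDerivAt (fun y : ℝ => y ^ (k+1)) (((k:ℝ)+1) * x ^ k) x := by
      simpa using hasDerivAt_pow (k+1) x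
    exact h1.mul (hder x hx)
  rw [intervalIntegral.integral_add hGI hgI] at key
  have h2 : (∫ x in (0:ℝ)..1, ((k:ℝ)+1) * x ^ k * G x)
      = ((k:ℝ)+1) * ∫ x in (0:ℝ)..1, x ^ k * G x := by
    rw [← intervalIntegral.integral_const_mul]
    congr 1; ext x; ring
  rw [h2] at key
  have h0 : (0:ℝ) ^ (k+1) = 0 := by
    simp
  rw [one_pow, h0, zero_mul, one_mul] at key
  linarith


private lemma lemA (d : ℕ) (f : ℝ → ℝ) (hf : ContDiffOn ℝ d f (Set.Icc 0 1)) :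
    ∀ i : ℕ, i ≤ d → ∃ β : Polynomial ℝ, ∀ n : ℕ,
      (∫ x in (0:ℝ)..1, x ^ (n+i) * iteratedDerivWithin i f (Set.Icc 0 1) x)
        = β.eval (n:ℝ) + (-1:ℝ)^i * (∏ t ∈ Finset.range i, ((n:ℝ) + t + 1))
            * ∫ x in (0:ℝ)..1, x ^ n * f x := by
  intro i
  induction i with
  | zero =>
    intro _
    refine ⟨0, fun n => by simp [iteratedDerivWithin_zero]⟩
  | succ i ih =>
    intro hi
    obtain ⟨β, hβ⟩ := ih (Nat.le_of_succ_le hi)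
    refine ⟨C (iteratedDerivWithin i f (Set.Icc 0 1) 1) - (X + C ((i:ℝ)+1)) * β, fun n => ?_⟩
    have hilt : (i : WithTop ℕ∞) < (d : WithTop ℕ∞) := by exact_mod_cast hi
    have hile : (i : WithTop ℕ∞) ≤ (d : WithTop ℕ∞) := le_of_lt hilt
    have hsile : ((i+1 : ℕ) : WithTop ℕ∞) ≤ (d : WithTop ℕ∞) := by exact_mod_cast hi
    have hcont_i : ContinuousOn (iteratedDerivWithin i f (Set.Icc 0 1)) (Set.Icc 0 1) :=
      hf.continuousOn_iteratedDerivWithin hile uniqueDiffOn_Icc_zero_one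
    have hcont_si : ContinuousOn (iteratedDerivWithin (i+1) f (Set.Icc 0 1)) (Set.Icc 0 1) :=
      hf.continuousOn_iteratedDerivWithin hsile uniqueDiffOn_Icc_zero_one
    have hder : ∀ x ∈ Ioo (0:ℝ) 1, HasDerivAt (iteratedDerivWithin i f (Set.Icc 0 1))
        (iteratedDerivWithin (i+1) f (Set.Icc 0 1) x) x := by
      intro x hx
      have hxI : x ∈ Set.Icc (0:ℝ) 1 := Ioo_subset_Icc_self hx
      have hmem : Set.Icc (0:ℝ) 1 ∈ nhds x := Icc_mem_nhds hx.1 hx.2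
      have hdiff : DifferentiableOn ℝ (iteratedDerivWithin i f (Set.Icc 0 1)) (Set.Icc 0 1) :=
        hf.differentiableOn_iteratedDerivWithin hilt uniqueDiffOn_Icc_zero_one
      have hW : HasDerivWithinAt (iteratedDerivWithin i f (Set.Icc 0 1))
          (derivWithin (iteratedDerivWithin i f (Set.Icc 0 1)) (Set.Icc 0 1) x)
          (Set.Icc 0 1) x := (hdiff x hxI).hasDerivWithinAt
      rw [iteratedDerivWithin_succ]
      exact hW.hasDerivAt hmem
    have key := ibp_aux _ _ hcont_i hcont_si hder (n + i)
    have hexp : n + (i+1) = (n+i) + 1 := rfl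
    rw [hexp, key, hβ n, Finset.prod_range_succ]
    simp only [eval_sub, eval_mul, eval_add, eval_X, eval_C]
    push_cast
    ring

private lemma delta_step (M : ℕ → ℝ) (E : ℕ) (q : ℕ → Polynomial ℝ) (b : Polynomial ℝ)
    (hsupp : ∀ j, E < j → q j = 0)
    (hrel : ∀ n : ℕ, (∑ j ∈ Finset.range (E+1), (q j).eval (n:ℝ) * M (n+j)) + b.eval (n:ℝ) = 0) :
    ∀ n : ℕ, (∑ j ∈ Finset.range (E+2),
        ((if j = 0 then 0 else (q (j-1)).comp (X + C 1)) - q j).eval (n:ℝ) * M (n+j))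
        + (b.comp (X + C 1) - b).eval (n:ℝ) = 0 := by
  intro n
  have hsplit : (∑ j ∈ Finset.range (E+2),
      ((if j = 0 then 0 else (q (j-1)).comp (X + C 1)) - q j).eval (n:ℝ) * M (n+j))
      = (∑ j ∈ Finset.range (E+2),
          ((if j = 0 then 0 else (q (j-1)).comp (X + C 1)) : Polynomial ℝ).eval (n:ℝ) * M (n+j))
        - ∑ j ∈ Finset.range (E+2), (q j).eval (n:ℝ) * M (n+j) := by
    rw [← Finset.sum_sub_distrib]
    refine Finset.sum_congr rfl fun j _ => ?_
    rw [eval_sub]; ring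
  have h1 : (∑ j ∈ Finset.range (E+2),
      ((if j = 0 then 0 else (q (j-1)).comp (X + C 1)) : Polynomial ℝ).eval (n:ℝ) * M (n+j))
      = ∑ j ∈ Finset.range (E+1), (q j).eval (((n+1:ℕ)):ℝ) * M ((n+1)+j) := by
    rw [Finset.sum_range_succ' (fun j =>
      ((if j = 0 then 0 else (q (j-1)).comp (X + C 1)) : Polynomial ℝ).eval (n:ℝ) * M (n+j)) (E+1)]
    simp only [↓reduceIte, Nat.succ_ne_zero, ite_false, eval_zero, zero_mul, add_zero,
      Nat.add_sub_cancel, eval_comp, eval_add, eval_X, eval_C]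
    refine Finset.sum_congr rfl fun j _ => ?_
    have hc : (n:ℝ) + 1 = ((n+1:ℕ):ℝ) := by push_cast; ring
    rw [hc, show n + (j+1) = (n+1) + j from by omega]
  have h2 : (∑ j ∈ Finset.range (E+2), (q j).eval (n:ℝ) * M (n+j))
      = ∑ j ∈ Finset.range (E+1), (q j).eval (n:ℝ) * M (n+j) := by
    rw [Finset.sum_range_succ, hsupp (E+1) (by omega)]
    simp
  have hb1 : (b.comp (X + C 1) - b).eval (n:ℝ) = b.eval ((n+1:ℕ):ℝ) - b.eval (n:ℝ) := by
    simp only [eval_sub, eval_comp, eval_add, eval_X, eval_C]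
    push_cast; ring_nf
  have r1 := hrel n
  have r2 := hrel (n+1)
  rw [hsplit, h1, h2, hb1]
  linarith

private lemma kill_inhom (M : ℕ → ℝ) :
    ∀ m : ℕ, ∀ (E : ℕ) (q : ℕ → Polynomial ℝ) (b : Polynomial ℝ),
      b.natDegree = m → q E ≠ 0 → (∀ j, E < j → q j = 0) →
      (∀ n : ℕ, (∑ j ∈ Finset.range (E+1), (q j).eval (n:ℝ) * M (n+j)) + b.eval (n:ℝ) = 0) →
      ∃ (e : ℕ) (Q : ℕ → Polynomial ℝ) (n₀ : ℕ),
        (∃ j ≤ e, Q j ≠ 0) ∧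
        ∀ n : ℕ, n₀ ≤ n → ∑ j ∈ Finset.range (e+1), (Q j).eval (n:ℝ) * M (n+j) = 0 := by
  intro m
  induction m using Nat.strong_induction_on with
  | _ m ih =>
    intro E q b hdeg hqE hsupp hrel
    by_cases hb : b = 0
    · exact ⟨E, q, 0, ⟨E, le_refl E, hqE⟩,
        fun n _ => by have := hrel n; simpa [hb] using this⟩
    · set q' : ℕ → Polynomial ℝ :=
        fun j => (if j = 0 then 0 else (q (j-1)).comp (X + C 1)) - q j with hq'
      have hrel' := delta_step M E q b hsupp hrel
      have hsupp' : ∀ j, E+1 < j → q' j = 0 := by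
        intro j hj
        simp only [hq']
        rw [hsupp j (by omega), hsupp (j-1) (by omega), if_neg (by omega)]
        simp
      have hq'top : q' (E+1) ≠ 0 := by
        simp only [hq']
        rw [if_neg (by omega), hsupp (E+1) (by omega), sub_zero, Nat.add_sub_cancel]
        exact comp_X_add_C_ne_zero _ hqE 1
      by_cases hdeg0 : b.natDegree = 0
      · have hb' : b.comp (X + C 1) - b = 0 := by
          obtain ⟨c, rfl⟩ := Polynomial.natDegree_eq_zero.mp hdeg0
          simp
        refine ⟨E+1, q', 0, ⟨E+1, le_refl _, hq'top⟩, fun n _ => ?_⟩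
        have h := hrel' n
        rw [hb', eval_zero, add_zero] at h
        simpa [hq', eval_sub, sub_mul, show E+2 = E+1+1 from rfl] using h
      · have hlt : (b.comp (X + C 1) - b).natDegree < m := by
          rw [← hdeg]
          exact delta_natDegree_lt b (by omega)
        exact ih _ hlt (E+1) q' _ rfl hq'top hsupp' hrel'

private lemma sum_shift_of_support (F : ℕ → ℝ) (a N JJ KK : ℕ)
    (hlow : ∀ j, j < a → F j = 0)
    (hhigh : ∀ j, JJ < j → F j = 0)
    (hk : ∀ k, KK < k → F (a + k) = 0)
    (hJN : JJ + 1 ≤ N) (hKN : KK + 1 ≤ N - a) :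
    ∑ j ∈ Finset.range (JJ+1), F j = ∑ k ∈ Finset.range (KK+1), F (a + k) := by
  have h1 : ∑ j ∈ Finset.range (JJ+1), F j = ∑ j ∈ Finset.range N, F j :=
    Finset.sum_subset (Finset.range_subset_range.mpr hJN)
      (fun j hj hnot => hhigh j (by simp [Finset.mem_range] at hj hnot ⊢; omega))
  have h2 : ∑ j ∈ Finset.range N, F j = ∑ j ∈ Finset.Ico a N, F j := by
    rw [Finset.range_eq_Ico]
    exact (Finset.sum_subset (Finset.Ico_subset_Ico (Nat.zero_le a) le_rfl)
      (fun j hj hnot => hlow j (by simp [Finset.mem_Ico] at hj hnot ⊢; omega))).symm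
  have h3 : ∑ j ∈ Finset.Ico a N, F j = ∑ k ∈ Finset.range (N - a), F (a + k) :=
    Finset.sum_Ico_eq_sum_range F a N
  have h4 : ∑ k ∈ Finset.range (N - a), F (a + k) = ∑ k ∈ Finset.range (KK+1), F (a + k) :=
    (Finset.sum_subset (Finset.range_subset_range.mpr hKN)
      (fun k hk' hnot => hk k (by simp [Finset.mem_range] at hk' hnot ⊢; omega))).symm
  rw [h1, h2, h3, h4]


/-- Proposition in Section 6: if `f : [0,1] → ℝ` is `d`-times continuously
differentiable (`d ≥ 1`) and satisfies a linear ODE with polynomial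
coefficients `p_d·f^{(d)} + ⋯ + p_0·f = 0` on `[0,1]` with `p_d` not
identically zero, then its Mellin transform `n ↦ ∫_0^1 x^n f(x) dx` is
`P`-finite: there are `e ≥ 0`, polynomials `q_0,…,q_e` not all zero and
`n₀ ∈ ℕ` with `Σ_{j=0}^e q_j(n)·M[f](n+j) = 0` for all `n ≥ n₀`. -/
theorem stmt_13 (d : ℕ) (hd : 1 ≤ d) (f : ℝ → ℝ)
    (hf : ContDiffOn ℝ d f (Set.Icc 0 1))
    (p : ℕ → Polynomial ℝ) (hp : p d ≠ 0)
    (hode : ∀ x ∈ Set.Icc (0 : ℝ) 1,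
      ∑ i ∈ Finset.range (d + 1),
        (p i).eval x * iteratedDerivWithin i f (Set.Icc 0 1) x = 0) :
    ∃ (e : ℕ) (q : ℕ → Polynomial ℝ) (n₀ : ℕ),
      (∃ j ≤ e, q j ≠ 0) ∧
      ∀ n : ℕ, n₀ ≤ n →
        ∑ j ∈ Finset.range (e + 1),
          (q j).eval (n : ℝ) * ∫ x in (0 : ℝ)..1, x ^ (n + j) * f x = 0 := by
  classical
  set β : ℕ → Polynomial ℝ := fun i =>
    if h : i ≤ d then Classical.choose (lemA d f hf i h) else 0 with hβdef
  have hβ : ∀ i, i ≤ d → ∀ n : ℕ,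
      (∫ x in (0:ℝ)..1, x ^ (n+i) * iteratedDerivWithin i f (Set.Icc 0 1) x)
        = (β i).eval (n:ℝ) + (-1:ℝ)^i * (∏ t ∈ Finset.range i, ((n:ℝ)+t+1))
            * ∫ x in (0:ℝ)..1, x ^ n * f x := by
    intro i hi n
    have h := Classical.choose_spec (lemA d f hf i hi) n
    rw [hβdef]
    simpa only [dif_pos hi] using h
  have hcontg : ∀ i, i ≤ d → ContinuousOn (iteratedDerivWithin i f (Set.Icc 0 1)) (Set.Icc 0 1) :=
    fun i hi =>
      hf.continuousOn_iteratedDerivWithin (by exact_mod_cast hi) uniqueDiffOn_Icc_zero_one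
  set K : ℕ := (Finset.range (d+1)).sup (fun i => (p i).natDegree) with hK
  have hKi : ∀ i, i ≤ d → (p i).natDegree < K + 1 := fun i hi =>
    Nat.lt_succ_of_le (Finset.le_sup (f := fun i => (p i).natDegree)
      (Finset.mem_range.mpr (by omega)))
  set A : Finset ℕ := (Finset.range (d+1)).filter (fun i => p i ≠ 0) with hA
  have hdA : d ∈ A := Finset.mem_filter.mpr ⟨Finset.mem_range.mpr (by omega), hp⟩
  set jm : ℕ := A.sup (fun i => d - i + (p i).natDegree) with hjm
  have hjmA : ∀ i ∈ A, d - i + (p i).natDegree ≤ jm := fun i hi => by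
    rw [hjm]; exact Finset.le_sup (f := fun i => d - i + (p i).natDegree) hi
  set q' : ℕ → Polynomial ℝ := fun j => ∑ i ∈ Finset.range (d+1),
      if d - i ≤ j then Polynomial.C ((p i).coeff (j - (d - i)) * (-1:ℝ)^i)
        * ∏ t ∈ Finset.range i, (Polynomial.X + Polynomial.C ((j:ℝ) + (t:ℝ) + 1)) else 0
    with hq'def
  set b : Polynomial ℝ := ∑ i ∈ Finset.range (d+1), ∑ k ∈ Finset.range (K+1),
      Polynomial.C ((p i).coeff k)
        * (β i).comp (Polynomial.X + Polynomial.C ((((d - i) + k : ℕ)) : ℝ)) with hbdef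
  have hsuppq' : ∀ j, jm < j → q' j = 0 := by
    intro j hj
    simp only [hq'def]
    refine Finset.sum_eq_zero fun i hi => ?_
    rw [Finset.mem_range] at hi
    by_cases hle : d - i ≤ j
    · rw [if_pos hle]
      have hc : (p i).coeff (j - (d-i)) = 0 := by
        by_cases hpi : p i = 0
        · rw [hpi]; simp
        · have hiA : i ∈ A := Finset.mem_filter.mpr ⟨Finset.mem_range.mpr hi, hpi⟩
          have := hjmA i hiA
          exact coeff_eq_zero_of_natDegree_lt (by omega)
      rw [hc, zero_mul, map_zero, zero_mul]
    · rw [if_neg hle]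
  have hq'top : q' jm ≠ 0 := by
    have hA'ne : ((A.filter (fun i => d - i + (p i).natDegree = jm)).Nonempty) := by
      obtain ⟨i0, hi0A, hi0⟩ := Finset.exists_mem_eq_sup A ⟨d, hdA⟩
        (fun i => d - i + (p i).natDegree)
      exact ⟨i0, Finset.mem_filter.mpr ⟨hi0A, by rw [hjm, hi0]⟩⟩
    set A' : Finset ℕ := A.filter (fun i => d - i + (p i).natDegree = jm) with hA'
    set istar : ℕ := A'.max' hA'ne with histar
    have hmem : istar ∈ A' := A'.max'_mem hA'ne
    have hmemA : istar ∈ A := (Finset.mem_filter.mp hmem).1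
    have heq : d - istar + (p istar).natDegree = jm := (Finset.mem_filter.mp hmem).2
    have hpstar : p istar ≠ 0 := (Finset.mem_filter.mp hmemA).2
    have hstarlt : istar < d + 1 := Finset.mem_range.mp (Finset.mem_filter.mp hmemA).1
    have hprodmonic : ∀ m : ℕ,
        (∏ t ∈ Finset.range m, (Polynomial.X + Polynomial.C ((jm:ℝ) + (t:ℝ) + 1))).Monic :=
      fun m => monic_prod_of_monic _ _ (fun t _ => monic_X_add_C _)
    have hproddeg : ∀ m : ℕ,
        (∏ t ∈ Finset.range m, (Polynomial.X + Polynomial.C ((jm:ℝ) + (t:ℝ) + 1))).natDegree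
          = m := by
      intro m
      have h1 : ∑ t ∈ Finset.range m,
          ((Polynomial.X : Polynomial ℝ) + Polynomial.C ((jm:ℝ) + (t:ℝ) + 1)).natDegree
          = ∑ _t ∈ Finset.range m, 1 :=
        Finset.sum_congr rfl (fun t _ => natDegree_X_add_C _)
      rw [natDegree_prod_of_monic _ _ (fun t _ => monic_X_add_C _), h1]
      simp
    have hval : (q' jm).coeff istar = (p istar).leadingCoeff * (-1:ℝ)^istar := by
      simp only [hq'def]
      rw [finset_sum_coeff]
      rw [Finset.sum_eq_single_of_mem istar (Finset.mem_range.mpr hstarlt)]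
      · have hco : (∏ t ∈ Finset.range istar,
            (Polynomial.X + Polynomial.C ((jm:ℝ) + (t:ℝ) + 1))).coeff istar = 1 := by
          have h := (hprodmonic istar).coeff_natDegree
          rwa [hproddeg istar] at h
        rw [if_pos (by omega), coeff_C_mul, hco, mul_one,
          show jm - (d - istar) = (p istar).natDegree from by omega, Polynomial.leadingCoeff]
      · intro i hi hne
        rw [Finset.mem_range] at hi
        by_cases hle : d - i ≤ jm
        · rw [if_pos hle]
          by_cases hc : (p i).coeff (jm - (d - i)) = 0
          · rw [hc, zero_mul, map_zero, zero_mul, coeff_zero]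
          · have hpi : p i ≠ 0 := fun h => hc (by rw [h]; simp)
            have hiA : i ∈ A := Finset.mem_filter.mpr ⟨Finset.mem_range.mpr hi, hpi⟩
            have h1 : jm - (d - i) ≤ (p i).natDegree := le_natDegree_of_ne_zero hc
            have h2 : d - i + (p i).natDegree ≤ jm := hjmA i hiA
            have h3 : d - i + (p i).natDegree = jm := by omega
            have hiA' : i ∈ A' := Finset.mem_filter.mpr ⟨hiA, h3⟩
            have hilt : i < istar := lt_of_le_of_ne (A'.le_max' i hiA') hne
            apply coeff_eq_zero_of_natDegree_lt
            refine lt_of_le_of_lt (natDegree_mul_le.trans ?_) (show i < istar from hilt)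
            rw [natDegree_C, zero_add, hproddeg i]
        · rw [if_neg hle, coeff_zero]
    intro hzero
    rw [hzero, coeff_zero] at hval
    have hlc : (p istar).leadingCoeff ≠ 0 := leadingCoeff_ne_zero.mpr hpstar
    have : (p istar).leadingCoeff * (-1:ℝ)^istar ≠ 0 :=
      mul_ne_zero hlc (pow_ne_zero _ (by norm_num))
    exact this hval.symm
  have hKle : ∀ i, i ≤ d → (p i).natDegree ≤ K := fun i hi =>
    Nat.lt_succ_iff.mp (hKi i hi)
  have hrel : ∀ n : ℕ, (∑ j ∈ Finset.range (jm+1),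
      (q' j).eval (n:ℝ) * ((fun m : ℕ => ∫ x in (0:ℝ)..1, x ^ m * f x) (n+j)))
      + b.eval (n:ℝ) = 0 := by
    intro n
    show (∑ j ∈ Finset.range (jm+1),
      (q' j).eval (n:ℝ) * ∫ x in (0:ℝ)..1, x ^ (n+j) * f x) + b.eval (n:ℝ) = 0
    have hintg : ∀ (m : ℕ) (i : ℕ), i ≤ d → IntervalIntegrable
        (fun x => x ^ m * iteratedDerivWithin i f (Set.Icc 0 1) x) volume 0 1 := fun m i hi =>
      ContinuousOn.intervalIntegrable_of_Icc zero_le_one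
        ((continuous_pow m).continuousOn.mul (hcontg i hi))
    have step1 : ∑ i ∈ Finset.range (d+1), (∫ x in (0:ℝ)..1,
        x ^ (n+d) * ((p i).eval x * iteratedDerivWithin i f (Set.Icc 0 1) x)) = 0 := by
      have hintegr : ∀ i ∈ Finset.range (d+1), IntervalIntegrable
          (fun x => x ^ (n+d) * ((p i).eval x * iteratedDerivWithin i f (Set.Icc 0 1) x))
          volume 0 1 := by
        intro i hi
        rw [Finset.mem_range] at hi
        exact ContinuousOn.intervalIntegrable_of_Icc zero_le_one
          ((continuous_pow (n+d)).continuousOn.mul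
            (((p i).continuous).continuousOn.mul (hcontg i (by omega))))
      rw [← intervalIntegral.integral_finset_sum hintegr]
      have hzero : Set.EqOn (fun x : ℝ => ∑ i ∈ Finset.range (d+1),
          x ^ (n+d) * ((p i).eval x * iteratedDerivWithin i f (Set.Icc 0 1) x))
          (fun _ => (0:ℝ)) (Set.uIcc 0 1) := by
        intro x hx
        rw [Set.uIcc_of_le zero_le_one] at hx
        simp only
        rw [← Finset.mul_sum, hode x hx, mul_zero]
      rw [intervalIntegral.integral_congr hzero]
      simp
    have step2 : ∀ i, i ≤ d → (∫ x in (0:ℝ)..1,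
        x ^ (n+d) * ((p i).eval x * iteratedDerivWithin i f (Set.Icc 0 1) x))
        = ∑ k ∈ Finset.range (K+1), (p i).coeff k
            * ∫ x in (0:ℝ)..1, x ^ (n+d+k) * iteratedDerivWithin i f (Set.Icc 0 1) x := by
      intro i hi
      have hfun : Set.EqOn (fun x : ℝ =>
          x ^ (n+d) * ((p i).eval x * iteratedDerivWithin i f (Set.Icc 0 1) x))
          (fun x : ℝ => ∑ k ∈ Finset.range (K+1), (p i).coeff k
            * (x ^ (n+d+k) * iteratedDerivWithin i f (Set.Icc 0 1) x)) (Set.uIcc 0 1) := by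
        intro x _
        simp only
        rw [eval_eq_sum_range' (hKi i hi) x, Finset.sum_mul, Finset.mul_sum]
        refine Finset.sum_congr rfl fun k _ => ?_
        rw [pow_add]; ring
      rw [intervalIntegral.integral_congr hfun,
        intervalIntegral.integral_finset_sum (fun k _ => ((hintg (n+d+k) i hi).const_mul _))]
      exact Finset.sum_congr rfl fun k _ => intervalIntegral.integral_const_mul _ _
    have main : ∑ i ∈ Finset.range (d+1), ∑ k ∈ Finset.range (K+1), (p i).coeff k *
        ((β i).eval (((n + (d-i) + k : ℕ)):ℝ)
          + (-1:ℝ)^i * (∏ t ∈ Finset.range i, ((((n + (d-i) + k : ℕ)):ℝ) + t + 1))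
            * ∫ x in (0:ℝ)..1, x ^ (n + (d-i) + k) * f x) = 0 := by
      calc ∑ i ∈ Finset.range (d+1), ∑ k ∈ Finset.range (K+1), (p i).coeff k *
            ((β i).eval (((n + (d-i) + k : ℕ)):ℝ)
              + (-1:ℝ)^i * (∏ t ∈ Finset.range i, ((((n + (d-i) + k : ℕ)):ℝ) + t + 1))
                * ∫ x in (0:ℝ)..1, x ^ (n + (d-i) + k) * f x)
          = ∑ i ∈ Finset.range (d+1), (∫ x in (0:ℝ)..1,
              x ^ (n+d) * ((p i).eval x * iteratedDerivWithin i f (Set.Icc 0 1) x)) := by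
            refine Finset.sum_congr rfl fun i hi => ?_
            rw [Finset.mem_range] at hi
            rw [step2 i (by omega)]
            refine Finset.sum_congr rfl fun k _ => ?_
            congr 1
            rw [show n + d + k = (n + (d - i) + k) + i from by omega]
            exact (hβ i (by omega) (n + (d-i) + k)).symm
        _ = 0 := step1
    have hsplit : ∑ i ∈ Finset.range (d+1), ∑ k ∈ Finset.range (K+1), (p i).coeff k *
        ((β i).eval (((n + (d-i) + k : ℕ)):ℝ)
          + (-1:ℝ)^i * (∏ t ∈ Finset.range i, ((((n + (d-i) + k : ℕ)):ℝ) + t + 1))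
            * ∫ x in (0:ℝ)..1, x ^ (n + (d-i) + k) * f x)
        = (∑ i ∈ Finset.range (d+1), ∑ k ∈ Finset.range (K+1), (p i).coeff k *
            (β i).eval (((n + (d-i) + k : ℕ)):ℝ))
          + ∑ i ∈ Finset.range (d+1), ∑ k ∈ Finset.range (K+1), (p i).coeff k *
            ((-1:ℝ)^i * (∏ t ∈ Finset.range i, ((((n + (d-i) + k : ℕ)):ℝ) + t + 1))
              * ∫ x in (0:ℝ)..1, x ^ (n + (d-i) + k) * f x) := by
      rw [← Finset.sum_add_distrib]
      refine Finset.sum_congr rfl fun i _ => ?_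
      rw [← Finset.sum_add_distrib]
      refine Finset.sum_congr rfl fun k _ => ?_
      ring
    have hbpart : (∑ i ∈ Finset.range (d+1), ∑ k ∈ Finset.range (K+1), (p i).coeff k *
        (β i).eval (((n + (d-i) + k : ℕ)):ℝ)) = b.eval (n:ℝ) := by
      rw [hbdef, eval_finset_sum]
      refine Finset.sum_congr rfl fun i _ => ?_
      rw [eval_finset_sum]
      refine Finset.sum_congr rfl fun k _ => ?_
      rw [eval_mul, eval_C, eval_comp, eval_add, eval_X, eval_C]
      congr 1
      push_cast
      ring
    have hevalq' : ∀ j : ℕ, (q' j).eval (n:ℝ) = ∑ i ∈ Finset.range (d+1),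
        (if d - i ≤ j then (p i).coeff (j - (d-i)) * (-1:ℝ)^i
          * ∏ t ∈ Finset.range i, ((n:ℝ) + ((j:ℝ) + (t:ℝ) + 1)) else 0) := by
      intro j
      simp only [hq'def, eval_finset_sum]
      refine Finset.sum_congr rfl fun i _ => ?_
      split_ifs with h
      · simp only [eval_mul, eval_C, eval_prod, eval_add, eval_X]
      · simp
    have hMpart : (∑ j ∈ Finset.range (jm+1), (q' j).eval (n:ℝ)
          * ∫ x in (0:ℝ)..1, x ^ (n+j) * f x)
        = ∑ i ∈ Finset.range (d+1), ∑ k ∈ Finset.range (K+1), (p i).coeff k *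
            ((-1:ℝ)^i * (∏ t ∈ Finset.range i, ((((n + (d-i) + k : ℕ)):ℝ) + t + 1))
              * ∫ x in (0:ℝ)..1, x ^ (n + (d-i) + k) * f x) := by
      calc (∑ j ∈ Finset.range (jm+1), (q' j).eval (n:ℝ)
            * ∫ x in (0:ℝ)..1, x ^ (n+j) * f x)
          = ∑ j ∈ Finset.range (jm+1), ∑ i ∈ Finset.range (d+1),
              (if d - i ≤ j then (p i).coeff (j - (d-i)) * (-1:ℝ)^i
                * ∏ t ∈ Finset.range i, ((n:ℝ) + ((j:ℝ) + (t:ℝ) + 1)) else 0)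
              * ∫ x in (0:ℝ)..1, x ^ (n+j) * f x := by
            refine Finset.sum_congr rfl fun j _ => ?_
            rw [hevalq' j, Finset.sum_mul]
        _ = ∑ i ∈ Finset.range (d+1), ∑ j ∈ Finset.range (jm+1),
              (if d - i ≤ j then (p i).coeff (j - (d-i)) * (-1:ℝ)^i
                * ∏ t ∈ Finset.range i, ((n:ℝ) + ((j:ℝ) + (t:ℝ) + 1)) else 0)
              * ∫ x in (0:ℝ)..1, x ^ (n+j) * f x := Finset.sum_comm
        _ = ∑ i ∈ Finset.range (d+1), ∑ k ∈ Finset.range (K+1), (p i).coeff k *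
              ((-1:ℝ)^i * (∏ t ∈ Finset.range i, ((((n + (d-i) + k : ℕ)):ℝ) + t + 1))
                * ∫ x in (0:ℝ)..1, x ^ (n + (d-i) + k) * f x) := by
            refine Finset.sum_congr rfl fun i hi => ?_
            rw [Finset.mem_range] at hi
            have hid : i ≤ d := by omega
            have hre := sum_shift_of_support (fun j =>
                (if d - i ≤ j then (p i).coeff (j - (d-i)) * (-1:ℝ)^i
                  * ∏ t ∈ Finset.range i, ((n:ℝ) + ((j:ℝ) + (t:ℝ) + 1)) else 0)
                * ∫ x in (0:ℝ)..1, x ^ (n+j) * f x)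
              (d - i) (jm + 1 + (d - i) + K + 1) jm K ?_ ?_ ?_ (by omega) (by omega)
            · rw [hre]
              refine Finset.sum_congr rfl fun k _ => ?_
              rw [if_pos (Nat.le_add_right _ _), Nat.add_sub_cancel_left,
                show n + ((d-i)+k) = n + (d-i) + k from by omega]
              have hpr : (∏ t ∈ Finset.range i, ((n:ℝ) + (((((d-i)+k) : ℕ) : ℝ) + (t:ℝ) + 1)))
                  = ∏ t ∈ Finset.range i, ((((n + (d-i) + k : ℕ)):ℝ) + t + 1) :=
                Finset.prod_congr rfl fun t _ => by push_cast; ring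
              rw [hpr]
              ring
            · intro j hj
              rw [if_neg (by omega), zero_mul]
            · intro j hj
              by_cases hle : d - i ≤ j
              · have hc : (p i).coeff (j - (d-i)) = 0 := by
                  by_cases hpi : p i = 0
                  · rw [hpi]; simp
                  · have hiA : i ∈ A := Finset.mem_filter.mpr
                      ⟨Finset.mem_range.mpr (by omega), hpi⟩
                    have := hjmA i hiA
                    exact coeff_eq_zero_of_natDegree_lt (by omega)
                rw [if_pos hle, hc, zero_mul, zero_mul, zero_mul]
              · rw [if_neg hle, zero_mul]
            · intro k hk
              have hc : (p i).coeff ((d - i) + k - (d - i)) = 0 := by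
                rw [Nat.add_sub_cancel_left]
                exact coeff_eq_zero_of_natDegree_lt (by have := hKle i hid; omega)
              rw [if_pos (Nat.le_add_right _ _), hc, zero_mul, zero_mul, zero_mul]
    rw [hMpart, ← hbpart]
    rw [hsplit] at main
    linarith
  obtain ⟨e, Q, n₀, hQ, hrec⟩ := kill_inhom (fun m : ℕ => ∫ x in (0:ℝ)..1, x ^ m * f x)
    b.natDegree jm q' b rfl hq'top hsuppq' hrel
  exact ⟨e, Q, n₀, hQ, fun n hn => hrec n hn⟩
end

section
/- Let a < 0 and let f : (0,1) → ℝ be continuously differentiable. Fix ε ∈ (0,1) and assume that x ↦ f(x) and x ↦ x·√(x−a)·f′(x) are Lebesgue integrable on (0, 1−ε). Then for every natural number N: ∫_0^{1−ε} x^N·f(x)/√(x−a) dx = ( (4a)^N / ((2N+1)·C(2N,N)) ) · ( ∫_0^{1−ε} f(x)/√(x−a) dx + 2·Σ_{i=1}^{N} ( C(2i,i)/(4a)^i ) · ( √(1−a−ε)·(1−ε)^i·f(1−ε) − ∫_0^{1−ε} x^i·√(x−a)·f′(x) dx ) ). -/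
open MeasureTheory Set Filter intervalIntegral
open scoped Topology Interval

lemma aux_not_int_inv {m : ℝ} (hm : 0 < m) :
    ¬ IntegrableOn (fun x : ℝ => x⁻¹) (Ioo 0 m) := by
  intro h
  have h2 : IntegrableOn (fun x : ℝ => x ^ (-1 : ℝ)) (Ioo 0 m) := by
    apply h.congr_fun ?_ measurableSet_Ioo
    intro x hx
    show x⁻¹ = x ^ (-1 : ℝ)
    rw [Real.rpow_neg_one]
  have := (integrableOn_Ioo_rpow_iff hm).mp h2
  linarith

lemma aux_seq {c : ℝ} (hc : 0 < c) {f : ℝ → ℝ}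
    (hf : IntegrableOn f (Ioo 0 c)) :
    ∃ δ : ℕ → ℝ, (∀ k, δ k ∈ Ioo 0 c) ∧ Tendsto δ atTop (𝓝 0) ∧
      Tendsto (fun k => δ k * f (δ k)) atTop (𝓝 0) := by
  have key : ∀ k : ℕ, ∃ t, t ∈ Ioo 0 (min c (1/(k+1))) ∧ |t * f t| < 1/(k+1) := by
    intro k
    by_contra hcon
    push_neg at hcon
    set m := min c (1/(k+1) : ℝ) with hm
    have hm0 : 0 < m := lt_min hc (by positivity)
    have hbig : ∀ t ∈ Ioo (0:ℝ) m, (1/(k+1) : ℝ) * t⁻¹ ≤ |f t| := by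
      intro t ht
      have h1 := hcon t ht
      have ht0 : 0 < t := ht.1
      rw [abs_mul, abs_of_pos ht0] at h1
      have := mul_le_mul_of_nonneg_right h1 (inv_pos.mpr ht0).le
      calc (1/(k+1) : ℝ) * t⁻¹ ≤ t * |f t| * t⁻¹ := this
        _ = |f t| := by field_simp
    have hint : IntegrableOn (fun x : ℝ => (1/(k+1) : ℝ) * x⁻¹) (Ioo 0 m) := by
      apply Integrable.mono (hf.mono_set (Ioo_subset_Ioo le_rfl (min_le_left _ _)))
        ((measurable_const.mul measurable_inv).aestronglyMeasurable)
      filter_upwards [ae_restrict_mem measurableSet_Ioo] with x hx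
      show ‖(1/(k+1) : ℝ) * x⁻¹‖ ≤ ‖f x‖
      rw [Real.norm_eq_abs, Real.norm_eq_abs, abs_mul, abs_of_pos (by positivity : (0:ℝ) < 1/(k+1)),
        abs_of_pos (inv_pos.mpr hx.1)]
      exact hbig x hx
    have hinv : IntegrableOn (fun x : ℝ => x⁻¹) (Ioo 0 m) := by
      have h3 : IntegrableOn (fun x : ℝ => (k+1 : ℝ) * ((1/(k+1) : ℝ) * x⁻¹)) (Ioo 0 m) :=
        hint.const_mul ((k+1 : ℝ))
      apply h3.congr_fun ?_ measurableSet_Ioo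
      intro x hx
      show (k+1 : ℝ) * ((1/(k+1) : ℝ) * x⁻¹) = x⁻¹
      have hx0 : x ≠ 0 := ne_of_gt hx.1
      field_simp
    exact aux_not_int_inv hm0 hinv
  choose δ hδ1 hδ2 using key
  refine ⟨δ, fun k => ⟨(hδ1 k).1, lt_of_lt_of_le (hδ1 k).2 (min_le_left _ _)⟩, ?_, ?_⟩
  · apply squeeze_zero (fun k => (hδ1 k).1.le)
      (fun k => le_of_lt (lt_of_lt_of_le (hδ1 k).2 (min_le_right _ _)))
    exact tendsto_one_div_add_atTop_nhds_zero_nat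
  · apply squeeze_zero_norm (fun k => ?_) tendsto_one_div_add_atTop_nhds_zero_nat
    exact (hδ2 k).le
lemma aux_tendsto {c : ℝ} (hc : 0 < c) {G : ℝ → ℝ} (hG : IntegrableOn G (Ioo 0 c))
    {δ : ℕ → ℝ} (hδ : ∀ k, δ k ∈ Ioo 0 c) (hδ0 : Tendsto δ atTop (𝓝 0)) :
    Tendsto (fun k => ∫ x in δ k..c, G x) atTop (𝓝 (∫ x in (0:ℝ)..c, G x)) := by
  have hGc : IntegrableOn G (Ioc 0 c) := by
    rwa [IntegrableOn, ← Measure.restrict_congr_set Ioo_ae_eq_Ioc]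
  have hGn : IntegrableOn (fun y => ‖G y‖) (Ioc 0 c) := hGc.norm
  have heq : ∀ k, (∫ x in δ k..c, G x) = ∫ x, (Ioc (δ k) c).indicator G x := by
    intro k
    rw [intervalIntegral.integral_of_le (hδ k).2.le,
      ← MeasureTheory.integral_indicator measurableSet_Ioc]
  have heq0 : (∫ x in (0:ℝ)..c, G x) = ∫ x, (Ioc 0 c).indicator G x := by
    rw [intervalIntegral.integral_of_le hc.le,
      ← MeasureTheory.integral_indicator measurableSet_Ioc]
  rw [heq0]
  simp only [heq]
  apply tendsto_integral_of_dominated_convergence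
      ((Ioc (0:ℝ) c).indicator (fun y => ‖G y‖))
  · intro k
    exact ((hGc.mono_set (Ioc_subset_Ioc (hδ k).1.le le_rfl)).integrable_indicator
      measurableSet_Ioc).aestronglyMeasurable
  · exact hGn.integrable_indicator measurableSet_Ioc
  · intro k
    filter_upwards with x
    rw [norm_indicator_eq_indicator_norm]
    exact indicator_le_indicator_of_subset (Ioc_subset_Ioc (hδ k).1.le le_rfl)
      (fun y => norm_nonneg _) x
  · filter_upwards with x
    by_cases hx : x ∈ Ioc 0 c
    · have hev : ∀ᶠ k in atTop, (Ioc 0 c).indicator G x = (Ioc (δ k) c).indicator G x := by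
        filter_upwards [hδ0.eventually_lt_const hx.1] with k hk
        rw [Set.indicator_of_mem hx, Set.indicator_of_mem (show x ∈ Ioc (δ k) c from ⟨hk, hx.2⟩)]
      exact Tendsto.congr' hev tendsto_const_nhds
    · have h0 : ∀ k, (Ioc 0 c).indicator G x = (Ioc (δ k) c).indicator G x := by
        intro k
        rw [indicator_of_notMem hx, indicator_of_notMem
          (fun hmem => hx (Ioc_subset_Ioc (hδ k).1.le le_rfl hmem))]
      exact Tendsto.congr (fun k => h0 k) tendsto_const_nhds

lemma aux_intA {a c : ℝ} (ha : a < 0) (hc : 0 < c) {f : ℝ → ℝ}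
    (hf : IntegrableOn f (Ioo 0 c)) (k : ℕ) :
    IntegrableOn (fun x => x ^ k * f x / Real.sqrt (x - a)) (Ioo 0 c) := by
  have hsa : (0:ℝ) < Real.sqrt (-a) := Real.sqrt_pos.mpr (by linarith)
  have h1 : AEStronglyMeasurable (fun x : ℝ => Real.sqrt (x - a)) (volume.restrict (Ioo 0 c)) :=
    (Real.continuous_sqrt.comp (continuous_id.sub continuous_const)).aestronglyMeasurable
  have h2 : AEMeasurable (fun x : ℝ => x ^ k * f x / Real.sqrt (x - a))
      (volume.restrict (Ioo 0 c)) :=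
    ((continuous_pow k).aemeasurable.mul hf.aestronglyMeasurable.aemeasurable).div
      h1.aemeasurable
  apply Integrable.mono' (hf.norm.const_mul (c ^ k / Real.sqrt (-a))) h2.aestronglyMeasurable
  · filter_upwards [ae_restrict_mem measurableSet_Ioo] with x hx
    have hxa : (0:ℝ) < x - a := by have := hx.1; linarith
    have hs : Real.sqrt (-a) ≤ Real.sqrt (x - a) := Real.sqrt_le_sqrt (by linarith [hx.1])
    rw [Real.norm_eq_abs, abs_div, abs_mul, abs_of_nonneg (Real.sqrt_nonneg _),
      abs_pow, abs_of_pos hx.1]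
    rw [div_le_iff₀ (Real.sqrt_pos.mpr hxa)]
    calc x ^ k * |f x| ≤ c ^ k * |f x| := by
          gcongr
          · exact hx.1.le
          · exact hx.2.le
      _ = (c ^ k / Real.sqrt (-a) * ‖f x‖) * Real.sqrt (-a) := by
          rw [Real.norm_eq_abs]; field_simp
      _ ≤ (c ^ k / Real.sqrt (-a) * ‖f x‖) * Real.sqrt (x - a) := by
          gcongr

lemma aux_intB {a c : ℝ} (hc : 0 < c) {g : ℝ → ℝ}
    (hg : IntegrableOn (fun x => x * Real.sqrt (x - a) * g x) (Ioo 0 c)) {k : ℕ} (hk : 1 ≤ k) :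
    IntegrableOn (fun x => x ^ k * Real.sqrt (x - a) * g x) (Ioo 0 c) := by
  have hfun : (fun x : ℝ => x ^ k * Real.sqrt (x - a) * g x)
      = fun x => x ^ (k-1) * (x * Real.sqrt (x - a) * g x) := by
    funext x
    rcases Nat.exists_eq_add_of_le hk with ⟨m, hm⟩
    subst hm
    have hm1 : 1 + m - 1 = m := by omega
    rw [hm1, pow_add, pow_one]
    ring
  rw [hfun]
  apply Integrable.mono' (hg.norm.const_mul (c ^ (k-1)))
  · exact (continuous_pow (k-1)).aestronglyMeasurable.mul hg.aestronglyMeasurable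
  · filter_upwards [ae_restrict_mem measurableSet_Ioo] with x hx
    rw [norm_mul, norm_pow, Real.norm_eq_abs, abs_of_pos hx.1]
    gcongr
    · exact hx.1.le
    · exact hx.2.le

lemma aux_rec {a c : ℝ} (ha : a < 0) (hc : 0 < c) (hc1 : c < 1) {f : ℝ → ℝ}
    (hdiff : ∀ t ∈ Set.Ioo (0 : ℝ) 1, DifferentiableAt ℝ f t)
    (hcont : ContinuousOn (deriv f) (Set.Ioo 0 1))
    (hint1 : IntegrableOn f (Ioo 0 c))
    (hint2 : IntegrableOn (fun x => x * Real.sqrt (x - a) * deriv f x) (Ioo 0 c))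
    (M : ℕ) :
    (2*((M:ℝ)+1)+1) * ∫ x in (0:ℝ)..c, x ^ (M+1) * f x / Real.sqrt (x - a)
      = 2*((M:ℝ)+1)*a * (∫ x in (0:ℝ)..c, x ^ M * f x / Real.sqrt (x - a))
        + 2*(Real.sqrt (c - a) * c ^ (M+1) * f c)
        - 2*(∫ x in (0:ℝ)..c, x ^ (M+1) * Real.sqrt (x - a) * deriv f x) := by
  obtain ⟨δ, hδmem, hδ0, hδf⟩ := aux_seq hc hint1
  have hfc : ContinuousOn f (Ioo 0 1) := fun x hx => (hdiff x hx).continuousAt.continuousWithinAt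
  have hsq : Continuous fun x : ℝ => Real.sqrt (x - a) :=
    Real.continuous_sqrt.comp (continuous_id.sub continuous_const)
  set u : ℝ → ℝ := fun x => x ^ (M+1) * Real.sqrt (x - a) with hu_def
  set u' : ℝ → ℝ := fun x => ((M:ℝ)+1) * x ^ M * Real.sqrt (x - a)
      + x ^ (M+1) * (1/(2*Real.sqrt (x - a))) with hu'_def
  -- the key identity for each k
  have Ek : ∀ k, (2*((M:ℝ)+1)+1) * ∫ x in (δ k)..c, x ^ (M+1) * f x / Real.sqrt (x - a)
      = 2*((M:ℝ)+1)*a * (∫ x in (δ k)..c, x ^ M * f x / Real.sqrt (x - a))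
        + 2*(u c * f c) - 2*(u (δ k) * f (δ k))
        - 2*(∫ x in (δ k)..c, x ^ (M+1) * Real.sqrt (x - a) * deriv f x) := by
    intro k
    set d := δ k with hd_def
    have hd : d ∈ Ioo 0 c := hδmem k
    have hsub : Icc d c ⊆ Ioo 0 1 :=
      fun x hx => ⟨lt_of_lt_of_le hd.1 hx.1, lt_of_le_of_lt hx.2 hc1⟩
    have huIcc : [[d, c]] = Icc d c := uIcc_of_le hd.2.le
    have hpos : ∀ x ∈ Icc d c, 0 < x - a := fun x hx => by
      have := hd.1; have := hx.1; linarith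
    have hu : ∀ x ∈ Icc d c, HasDerivAt u (u' x) x := by
      intro x hx
      have hxa := hpos x hx
      have h0 : HasDerivAt (fun y : ℝ => y - a) 1 x := (hasDerivAt_id x).sub_const a
      have hs : HasDerivAt (fun y : ℝ => Real.sqrt (y - a)) (1/(2*Real.sqrt (x - a))) x := by
        simpa using h0.sqrt (ne_of_gt hxa)
      have hp : HasDerivAt (fun y : ℝ => y ^ (M+1)) (((M:ℝ)+1) * x ^ M) x := by
        simpa using hasDerivAt_pow (M+1) x
      exact hp.mul hs
    have hucont : ContinuousOn u [[d, c]] :=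
      (((continuous_pow (M+1)).mul hsq)).continuousOn
    have hfcont : ContinuousOn f [[d, c]] := hfc.mono (huIcc ▸ hsub)
    have hsqne : ∀ x ∈ Icc d c, Real.sqrt (x - a) ≠ 0 :=
      fun x hx => ne_of_gt (Real.sqrt_pos.mpr (hpos x hx))
    have hu'cont : ContinuousOn u' (Icc d c) := by
      apply ContinuousOn.add
      · exact ((continuous_const.mul (continuous_pow M)).mul hsq).continuousOn
      · exact ((continuous_pow (M+1)).continuousOn).mul
          (continuousOn_const.div ((continuous_const.mul hsq).continuousOn)
            (fun x hx => by
              have := hsqne x hx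
              positivity))
    have hu'int : IntervalIntegrable u' volume d c := by
      rw [intervalIntegrable_iff_integrableOn_Icc_of_le hd.2.le]
      exact hu'cont.integrableOn_compact isCompact_Icc
    have hf'cont : ContinuousOn (deriv f) (Icc d c) := hcont.mono hsub
    have hf'int : IntervalIntegrable (deriv f) volume d c := by
      rw [intervalIntegrable_iff_integrableOn_Icc_of_le hd.2.le]
      exact hf'cont.integrableOn_compact isCompact_Icc
    have IBP := intervalIntegral.integral_deriv_mul_eq_sub_of_hasDerivAt hucont hfcont
      (fun x hx => hu x (by
        rw [min_eq_left hd.2.le, max_eq_right hd.2.le] at hx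
        exact ⟨hx.1.le, hx.2.le⟩))
      (fun x hx => (hdiff x (hsub (by
        rw [min_eq_left hd.2.le, max_eq_right hd.2.le] at hx
        exact ⟨hx.1.le, hx.2.le⟩))).hasDerivAt)
      hu'int hf'int
    -- split the integral
    have hi1 : IntervalIntegrable (fun x => u' x * f x) volume d c := by
      rw [intervalIntegrable_iff_integrableOn_Icc_of_le hd.2.le]
      exact (hu'cont.mul (hfcont.mono (le_of_eq huIcc.symm))).integrableOn_compact isCompact_Icc
    have hi2 : IntervalIntegrable (fun x => u x * deriv f x) volume d c := by
      rw [intervalIntegrable_iff_integrableOn_Icc_of_le hd.2.le]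
      exact ((hucont.mono (le_of_eq huIcc.symm)).mul hf'cont).integrableOn_compact isCompact_Icc
    rw [intervalIntegral.integral_add hi1 hi2] at IBP
    -- rewrite first integral
    have hg1 : IntervalIntegrable (fun x => x ^ (M+1) * f x / Real.sqrt (x - a)) volume d c := by
      rw [intervalIntegrable_iff_integrableOn_Icc_of_le hd.2.le]
      exact ((((continuous_pow (M+1)).continuousOn).mul
        (hfcont.mono (le_of_eq huIcc.symm))).div hsq.continuousOn hsqne).integrableOn_compact
        isCompact_Icc
    have hg0 : IntervalIntegrable (fun x => x ^ M * f x / Real.sqrt (x - a)) volume d c := by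
      rw [intervalIntegrable_iff_integrableOn_Icc_of_le hd.2.le]
      exact ((((continuous_pow M).continuousOn).mul
        (hfcont.mono (le_of_eq huIcc.symm))).div hsq.continuousOn hsqne).integrableOn_compact
        isCompact_Icc
    have hrw : (∫ x in d..c, u' x * f x)
        = ((2*((M:ℝ)+1)+1)/2) * (∫ x in d..c, x ^ (M+1) * f x / Real.sqrt (x - a))
          - (((M:ℝ)+1)*a) * (∫ x in d..c, x ^ M * f x / Real.sqrt (x - a)) := by
      rw [← intervalIntegral.integral_const_mul, ← intervalIntegral.integral_const_mul,
        ← intervalIntegral.integral_sub (hg1.const_mul _) (hg0.const_mul _)]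
      apply intervalIntegral.integral_congr
      intro x hx
      rw [huIcc] at hx
      have hxa := hpos x hx
      have hs0 := hsqne x hx
      have hs2 : Real.sqrt (x - a) * Real.sqrt (x - a) = x - a := Real.mul_self_sqrt hxa.le
      show u' x * f x = _
      rw [hu'_def]
      field_simp
      linear_combination (2*((M:ℝ)+1) * x ^ M * f x) * (Real.sq_sqrt hxa.le)
    -- uf' integral rewrite
    have huf' : (∫ x in d..c, u x * deriv f x)
        = ∫ x in d..c, x ^ (M+1) * Real.sqrt (x - a) * deriv f x := by
      apply intervalIntegral.integral_congr
      intro x hx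
      rw [hu_def]
    rw [hrw, huf'] at IBP
    linarith [IBP]
  have hIA := aux_tendsto hc (aux_intA ha hc hint1 (M+1)) hδmem hδ0
  have hIB := aux_tendsto hc (aux_intA ha hc hint1 M) hδmem hδ0
  have hIH := aux_tendsto hc (aux_intB hc hint2 (Nat.le_add_left 1 M)) hδmem hδ0
  have hT3 : Tendsto (fun k => u (δ k) * f (δ k)) atTop (𝓝 0) := by
    have hnorm := hδf.norm
    rw [norm_zero] at hnorm
    have hmul := hnorm.const_mul (c ^ M * Real.sqrt (c - a))
    rw [mul_zero] at hmul
    apply squeeze_zero_norm ?_ hmul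
    intro k
    have hd := hδmem k
    have h1 : u (δ k) * f (δ k) = (δ k ^ M * Real.sqrt (δ k - a)) * (δ k * f (δ k)) := by
      show δ k ^ (M+1) * Real.sqrt (δ k - a) * f (δ k) = _
      rw [pow_succ]
      ring
    rw [h1, norm_mul]
    apply mul_le_mul_of_nonneg_right ?_ (norm_nonneg _)
    rw [Real.norm_eq_abs, abs_mul, abs_pow, abs_of_pos hd.1,
      abs_of_nonneg (Real.sqrt_nonneg _)]
    exact mul_le_mul (pow_le_pow_left₀ hd.1.le hd.2.le M)
      (Real.sqrt_le_sqrt (by linarith [hd.2])) (Real.sqrt_nonneg _) (by positivity)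
  have hL := hIA.const_mul (2*((M:ℝ)+1)+1)
  have hR := (((hIB.const_mul (2*((M:ℝ)+1)*a)).add_const (2*(u c * f c))).sub
    (hT3.const_mul 2)).sub (hIH.const_mul 2)
  have hfinal := tendsto_nhds_unique (hL.congr Ek) hR
  have huc : u c * f c = Real.sqrt (c - a) * c ^ (M+1) * f c := by
    show c ^ (M+1) * Real.sqrt (c - a) * f c = _
    ring
  rw [huc] at hfinal
  linarith [hfinal]
lemma aux_choose (N : ℕ) :
    (N+1) * Nat.choose (2*N+2) (N+1) = 2*(2*N+1) * Nat.choose (2*N) N := by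
  have h1 := Nat.add_one_mul_choose_eq (2*N+1) N
  have h2 := Nat.add_one_mul_choose_eq (2*N) N
  have h3 : (2*N+1).choose (N+1) = (2*N+1).choose N := by
    rw [← Nat.choose_symm (by omega : N+1 ≤ 2*N+1)]
    congr 1
    omega
  calc (N+1) * Nat.choose (2*N+2) (N+1)
      = Nat.choose (2*N+1+1) (N+1) * (N+1) := by ring_nf
    _ = (2*N+1+1) * Nat.choose (2*N+1) N := h1.symm
    _ = 2*((2*N+1).choose (N+1) * (N+1)) := by rw [← h3]; ring
    _ = 2*((2*N+1) * Nat.choose (2*N) N) := by rw [← h2]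
    _ = 2*(2*N+1) * Nat.choose (2*N) N := by ring

/-- Lemma 6.2 (Transform2): for `a < 0`, `f` continuously differentiable on
`(0,1)`, `ε ∈ (0,1)` with the stated integrability, and every `N ∈ ℕ`,
`∫_0^{1-ε} x^N f(x)/√(x-a) dx = ((4a)^N/((2N+1)·C(2N,N))) ·
  ( ∫_0^{1-ε} f(x)/√(x-a) dx
    + 2·Σ_{i=1}^N (C(2i,i)/(4a)^i)·( √(1-a-ε)·(1-ε)^i·f(1-ε)
        - ∫_0^{1-ε} x^i √(x-a) f'(x) dx ) )`. -/
theorem stmt_14 (a : ℝ) (ha : a < 0) (f : ℝ → ℝ)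
    (hdiff : ∀ t ∈ Set.Ioo (0 : ℝ) 1, DifferentiableAt ℝ f t)
    (hcont : ContinuousOn (deriv f) (Set.Ioo 0 1))
    (ε : ℝ) (hε0 : 0 < ε) (hε1 : ε < 1)
    (hint1 : MeasureTheory.IntegrableOn f (Set.Ioo 0 (1 - ε)))
    (hint2 : MeasureTheory.IntegrableOn
      (fun x => x * Real.sqrt (x - a) * deriv f x) (Set.Ioo 0 (1 - ε))) :
    ∀ N : ℕ,
      (∫ x in (0 : ℝ)..(1 - ε), x ^ N * f x / Real.sqrt (x - a)) =
        ((4 * a) ^ N / ((2 * (N : ℝ) + 1) * (Nat.choose (2 * N) N : ℝ))) *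
          ((∫ x in (0 : ℝ)..(1 - ε), f x / Real.sqrt (x - a)) +
            2 * ∑ i ∈ Finset.Icc 1 N,
              ((Nat.choose (2 * i) i : ℝ) / (4 * a) ^ i) *
                (Real.sqrt (1 - a - ε) * (1 - ε) ^ i * f (1 - ε) -
                  ∫ x in (0 : ℝ)..(1 - ε), x ^ i * Real.sqrt (x - a) * deriv f x)) := by
  have hsr : Real.sqrt (1 - a - ε) = Real.sqrt ((1 - ε) - a) := by
    congr 1
    ring
  rw [hsr]
  set c : ℝ := 1 - ε with hc_def
  have hc : 0 < c := by rw [hc_def]; linarith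
  have hc1 : c < 1 := by rw [hc_def]; linarith
  intro N
  induction N with
  | zero => simp
  | succ M ih =>
    have hrec := aux_rec ha hc hc1 hdiff hcont hint1 hint2 M
    have h22 : 2*(M+1) = 2*M+2 := by ring
    have hchN : (M+1) * Nat.choose (2*(M+1)) (M+1) = 2*(2*M+1) * Nat.choose (2*M) M := by
      rw [h22]; exact aux_choose M
    have hch : ((M:ℝ)+1) * (Nat.choose (2*(M+1)) (M+1) : ℝ)
        = 2*(2*(M:ℝ)+1)*(Nat.choose (2*M) M : ℝ) := by exact_mod_cast hchN
    have hC1 : (Nat.choose (2*M) M : ℝ) ≠ 0 := by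
      exact_mod_cast (Nat.choose_pos (by omega : M ≤ 2*M)).ne'
    have hC2 : (Nat.choose (2*(M+1)) (M+1) : ℝ) ≠ 0 := by
      exact_mod_cast (Nat.choose_pos (by omega : M+1 ≤ 2*(M+1))).ne'
    have ha4 : (4*a : ℝ) ≠ 0 := by intro h; nlinarith
    have hpow : (4*a : ℝ)^M ≠ 0 := pow_ne_zero _ ha4
    have h2M1 : (2*(M:ℝ)+1) ≠ 0 := by positivity
    have h2M3 : (2*((M:ℝ)+1)+1) ≠ 0 := by positivity
    rw [Finset.sum_Icc_succ_top (by omega : 1 ≤ M+1)]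
    push_cast
    apply mul_left_cancel₀ h2M3
    rw [hrec, ih]
    have hC1eq : (Nat.choose (2*M) M : ℝ)
        = ((M:ℝ)+1)*(Nat.choose (2*(M+1)) (M+1) : ℝ) / (2*(2*(M:ℝ)+1)) := by
      field_simp
      linarith [hch]
    rw [hC1eq]
    have ha0 : a ≠ 0 := ne_of_lt ha
    generalize (∑ i ∈ Finset.Icc 1 M, ((Nat.choose (2 * i) i : ℝ) / (4 * a) ^ i) * (Real.sqrt (c - a) * c ^ i * f c - ∫ x in (0 : ℝ)..c, x ^ i * Real.sqrt (x - a) * deriv f x)) = S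
    field_simp
    ring
end
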